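/- arXiv:2011.07352 — 11 statements merged into one kernel-verified Lean document; each statement's English description precedes it below -/
import Mathlib

section
/- There exist a function η : ℕ → ℕ and a map Φ from P to {f : ℕ → ℕ | f(k) < η(k) for all k} such that for all f and g in P, if f ≤* g and g ≰* f then Φ(f) <* Φ(g). -/
open Filter

/-- `P` is the set of `f : ℕ → ℕ` with `f 0 = 0` and `f k < k` for all `k ≥ 1`
(the set denoted `∏_k k` in the paper). -/
def MemP (f : ℕ → ℕ) : Prop := f 0 = 0 ∧ ∀ k, 1 ≤ k → f k < k

/-- `f ≤* g`: `f j ≤ g j` for all but finitely many `j`. -/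
def LeStar (f g : ℕ → ℕ) : Prop := ∀ᶠ j in atTop, f j ≤ g j

/-- `f <* g`: `f j < g j` for all but finitely many `j`. -/
def LtStar (f g : ℕ → ℕ) : Prop := ∀ᶠ j in atTop, f j < g j

lemma sum_gain (f g : ℕ → ℕ) (N : ℕ) (hN : ∀ j, N ≤ j → f j ≤ g j)
    (hfreq : ∀ M, ∃ j, M ≤ j ∧ f j < g j) (m : ℕ) :
    ∃ K, N ≤ K ∧ ∀ k, K ≤ k →
      (∑ j ∈ Finset.Ico N k, f j) + m ≤ ∑ j ∈ Finset.Ico N k, g j := by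
  induction m with
  | zero =>
    refine ⟨N, le_rfl, fun k hk => ?_⟩
    simpa using Finset.sum_le_sum (fun j hj => hN j (Finset.mem_Ico.mp hj).1)
  | succ m ih =>
    obtain ⟨K, hNK, hK⟩ := ih
    obtain ⟨j0, hj0K, hj0⟩ := hfreq K
    refine ⟨j0 + 1, le_trans hNK (le_trans hj0K (Nat.le_succ _)), fun k hk => ?_⟩
    have hNj0 : N ≤ j0 := le_trans hNK hj0K
    have hsplit : ∀ h : ℕ → ℕ, ∑ j ∈ Finset.Ico N k, h j =
        (∑ j ∈ Finset.Ico N j0, h j) + h j0 + ∑ j ∈ Finset.Ico (j0+1) k, h j := by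
      intro h
      rw [← Finset.sum_Ico_consecutive (fun j => h j) (le_trans hNj0 (Nat.le_succ _)) hk,
        Finset.sum_Ico_succ_top hNj0]
    rw [hsplit f, hsplit g]
    have h1 : (∑ j ∈ Finset.Ico N j0, f j) + m ≤ ∑ j ∈ Finset.Ico N j0, g j :=
      hK j0 hj0K
    have h2 : ∑ j ∈ Finset.Ico (j0+1) k, f j ≤ ∑ j ∈ Finset.Ico (j0+1) k, g j :=
      Finset.sum_le_sum (fun j hj => hN j (le_trans hNj0 (le_trans (Nat.le_succ _)
        (Finset.mem_Ico.mp hj).1)))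
    omega
  
/-- There exist `η : ℕ → ℕ` and `Φ` from `P` to `{f | ∀ k, f k < η k}` such that for all
`f, g ∈ P`, if `f ≤* g` and `g ≰* f` then `Φ f <* Φ g`. -/
theorem stmt0 :
    ∃ (η : ℕ → ℕ) (Φ : (ℕ → ℕ) → (ℕ → ℕ)),
      (∀ f, MemP f → ∀ k, Φ f k < η k) ∧
      (∀ f g, MemP f → MemP g → LeStar f g → ¬ LeStar g f → LtStar (Φ f) (Φ g)) := by
  refine ⟨fun k => (∑ j ∈ Finset.range (k+1), j) + 1,
    fun f k => ∑ j ∈ Finset.range (k+1), f j, ?_, ?_⟩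
  · intro f hf k
    show ∑ j ∈ Finset.range (k+1), f j < (∑ j ∈ Finset.range (k+1), j) + 1
    have : ∑ j ∈ Finset.range (k+1), f j ≤ ∑ j ∈ Finset.range (k+1), j := by
      refine Finset.sum_le_sum (fun j _ => ?_)
      rcases Nat.eq_zero_or_pos j with h | h
      · simp [h, hf.1]
      · exact le_of_lt (hf.2 j h)
    omega
  · intro f g hf hg hle hnle
    obtain ⟨N, hN⟩ := eventually_atTop.mp hle
    have hfreq : ∀ M, ∃ j, M ≤ j ∧ f j < g j := by
      intro M
      by_contra h
      push_neg at h
      exact hnle (eventually_atTop.mpr ⟨M, fun j hj => h j hj⟩)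
    obtain ⟨K, hNK, hK⟩ := sum_gain f g N hN hfreq ((∑ j ∈ Finset.range N, f j) + 1)
    refine eventually_atTop.mpr ⟨K, fun k hk => ?_⟩
    have hsplit : ∀ h : ℕ → ℕ, ∑ j ∈ Finset.range (k+1), h j =
        (∑ j ∈ Finset.range N, h j) + ∑ j ∈ Finset.Ico N (k+1), h j := by
      intro h
      rw [Finset.range_eq_Ico, Finset.range_eq_Ico]
      exact (Finset.sum_Ico_consecutive h (Nat.zero_le _)
        (le_trans hNK (le_trans hk (Nat.le_succ _)))).symm
    have hmain := hK (k+1) (le_trans hk (Nat.le_succ _))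
    show ∑ j ∈ Finset.range (k+1), f j < ∑ j ∈ Finset.range (k+1), g j
    rw [hsplit f, hsplit g]
    omega
end

section
/- There exists a binary relation ≺ on ℕ which is asymmetric (m ≺ n implies ¬(n ≺ m)) and has the following extension property: for all pairwise disjoint finite sets F, G, H ⊆ ℕ there exists n ∈ ℕ \ (F ∪ G ∪ H) such that m ≺ n for all m ∈ F, n ≺ m for all m ∈ G, and for every m ∈ H neither m ≺ n nor n ≺ m. -/
noncomputable def fdig (n k : ℕ) : ℕ := (Nat.digits 3 n).getD k 0


/-- There exists an asymmetric binary relation `≺` on `ℕ` with the extension property: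
for all pairwise disjoint finite `F, G, H ⊆ ℕ` there is `n ∉ F ∪ G ∪ H` with `m ≺ n` for
`m ∈ F`, `n ≺ m` for `m ∈ G`, and `n` unrelated to every `m ∈ H`. -/
theorem stmt1 :
    ∃ r : ℕ → ℕ → Prop,
      (∀ m n, r m n → ¬ r n m) ∧
      (∀ F G H : Finset ℕ, Disjoint F G → Disjoint F H → Disjoint G H →
        ∃ n : ℕ, n ∉ F ∪ G ∪ H ∧ (∀ m ∈ F, r m n) ∧ (∀ m ∈ G, r n m) ∧
          (∀ m ∈ H, ¬ r m n ∧ ¬ r n m)) := by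
  refine ⟨fun m n => (m < n ∧ fdig n m = 1) ∨ (n < m ∧ fdig m n = 2), ?_, ?_⟩
  · rintro m n (⟨h1, h2⟩ | ⟨h1, h2⟩) (⟨h3, h4⟩ | ⟨h3, h4⟩) <;> omega
  · intro F G H hFG hFH hGH
    set N := (F ∪ G ∪ H).sup id + 1 with hN
    have hlt : ∀ m ∈ F ∪ G ∪ H, m < N := by
      intro m hm
      have := Finset.le_sup (f := id) hm
      simp only [id] at this
      omega
    set c : ℕ → ℕ := fun m => if m ∈ F then 1 else if m ∈ G then 2 else 0 with hc
    set L : List ℕ := (List.range N).map c ++ [1] with hL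
    set n : ℕ := Nat.ofDigits 3 L with hn
    have hclt : ∀ m, c m < 3 := by
      intro m; simp only [hc]; split_ifs <;> omega
    have hdig : Nat.digits 3 n = L := by
      apply Nat.digits_ofDigits 3 (by norm_num)
      · intro l hl
        rcases List.mem_append.1 hl with h | h
        · obtain ⟨a, _, rfl⟩ := List.mem_map.1 h; exact hclt a
        · simp at h; omega
      · intro _; rw [List.getLast_append]; norm_num
    have hfd : ∀ m < N, fdig n m = c m := by
      intro m hm
      rw [fdig, hdig, hL, List.getD_append _ _ _ _ (by simpa using hm),
        List.getD_eq_getElem _ _ (by simpa using hm)]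
      simp [hm]
    have hbig : 3 ^ N ≤ n := by
      rw [hn, hL, Nat.ofDigits_append]
      simp [Nat.ofDigits]
    have hngt : ∀ m ∈ F ∪ G ∪ H, m < n := by
      intro m hm
      have := hlt m hm
      have : N < 3 ^ N := Nat.lt_pow_self (show 1 < 3 by norm_num)
      omega
    refine ⟨n, ?_, ?_, ?_, ?_⟩
    · intro hmem; exact absurd (hngt n hmem) (lt_irrefl n)
    · intro m hm
      refine Or.inl ⟨hngt m (by simp [hm]), ?_⟩
      rw [hfd m (hlt m (by simp [hm]))]
      simp [hc, hm]
    · intro m hm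
      refine Or.inr ⟨hngt m (by simp [hm]), ?_⟩
      rw [hfd m (hlt m (by simp [hm]))]
      have : m ∉ F := fun h => Finset.disjoint_left.1 hFG h hm
      simp [hc, hm, this]
    · intro m hm
      have hmF : m ∉ F := fun h => Finset.disjoint_left.1 hFH h hm
      have hmG : m ∉ G := fun h => Finset.disjoint_left.1 hGH h hm
      have hd : fdig n m = 0 := by
        rw [hfd m (hlt m (by simp [hm]))]; simp [hc, hmF, hmG]
      have hmn := hngt m (by simp [hm])
      constructor
      · rintro (⟨_, h2⟩ | ⟨h1, _⟩) <;> omega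
      · rintro (⟨h1, _⟩ | ⟨_, h2⟩) <;> omega
end

section
/- Let I be a finite linearly ordered set with |I| ≥ 2, let A and F(ξ), for ξ ∈ I, be pairwise disjoint sets, and let ≤ be a partial order on a set including E := A ∪ ⋃_{ξ∈I} F(ξ). Then the depletion ≪_I of ≤ given by these parameters is a partial order on E (reflexive, antisymmetric, and transitive) whose graph is included in the graph of ≤. -/
variable {α ι : Type*}

/-- `ζ` and `ζ'` are consecutive in the finite index set `s`:
`ζ < ζ'` and no element of `s` lies strictly between them. -/
def ConsecIn [LinearOrder ι] (s : Finset ι) (ζ ζ' : ι) : Prop :=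
  ζ < ζ' ∧ ∀ η ∈ s, ¬(ζ < η ∧ η < ζ')

/-- The depletion `≪_s` of the partial order `≤` of `α` given by the finite linearly
ordered index set `s`, the set `A`, and the family `(F ξ)_{ξ ∈ s}`. -/
def Depl [PartialOrder α] [LinearOrder ι] (A : Set α) (F : ι → Set α)
    (s : Finset ι) (x y : α) : Prop :=
  x ≤ y ∧
  ((∃ ξ ∈ s, x ∈ A ∪ F ξ ∧ y ∈ A ∪ F ξ) ∨
   (∃ i ∈ s, ∃ j ∈ s, i < j ∧ x ∈ F i ∧ y ∈ F j ∧
     ((∃ a ∈ A, x ≤ a ∧ a ≤ y) ∨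
      (∃ w : ι → α, w i = x ∧ w j = y ∧
        (∀ ζ ∈ s, i ≤ ζ → ζ ≤ j → w ζ ∈ F ζ) ∧
        (∀ ζ ∈ s, ∀ ζ' ∈ s, i ≤ ζ → ζ' ≤ j → ConsecIn s ζ ζ' → w ζ ≤ w ζ')))) ∨
   (∃ i ∈ s, ∃ j ∈ s, j < i ∧ x ∈ F i ∧ y ∈ F j ∧
     ((∃ a ∈ A, x ≤ a ∧ a ≤ y) ∨
      (∃ w : ι → α, w j = y ∧ w i = x ∧
        (∀ ζ ∈ s, j ≤ ζ → ζ ≤ i → w ζ ∈ F ζ) ∧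
        (∀ ζ ∈ s, ∀ ζ' ∈ s, j ≤ ζ → ζ' ≤ i → ConsecIn s ζ ζ' → w ζ' ≤ w ζ)))))

section Helpers

variable [PartialOrder α] [LinearOrder ι]

/-- An increasing chain supported on `s ∩ [i, j]` with values in the fibers `F`. -/
def IsUp (F : ι → Set α) (s : Finset ι) (w : ι → α) (i j : ι) : Prop :=
  (∀ ζ ∈ s, i ≤ ζ → ζ ≤ j → w ζ ∈ F ζ) ∧
  (∀ ζ ∈ s, ∀ ζ' ∈ s, i ≤ ζ → ζ' ≤ j → ConsecIn s ζ ζ' → w ζ ≤ w ζ')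

lemma consec_mono {s : Finset ι} {w : ι → α} {i j : ι}
    (h : ∀ ζ ∈ s, ∀ ζ' ∈ s, i ≤ ζ → ζ' ≤ j → ConsecIn s ζ ζ' → w ζ ≤ w ζ') :
    ∀ ζ ∈ s, ∀ ζ' ∈ s, i ≤ ζ → ζ ≤ ζ' → ζ' ≤ j → w ζ ≤ w ζ' := by
  suffices H : ∀ n : ℕ, ∀ ζ ∈ s, ∀ ζ' ∈ s,
      (s.filter fun η => ζ < η ∧ η ≤ ζ').card ≤ n →
      i ≤ ζ → ζ ≤ ζ' → ζ' ≤ j → w ζ ≤ w ζ' by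
    intro ζ hζ ζ' hζ' h1 h2 h3
    exact H _ ζ hζ ζ' hζ' le_rfl h1 h2 h3
  intro n
  induction n with
  | zero =>
    intro ζ hζ ζ' hζ' hcard h1 h2 h3
    rcases eq_or_lt_of_le h2 with rfl | hlt
    · exact le_rfl
    · have hmem : ζ' ∈ s.filter fun η => ζ < η ∧ η ≤ ζ' :=
        Finset.mem_filter.2 ⟨hζ', hlt, le_rfl⟩
      have := Finset.card_pos.2 ⟨ζ', hmem⟩
      omega
  | succ n ih =>
    intro ζ hζ ζ' hζ' hcard h1 h2 h3
    rcases eq_or_lt_of_le h2 with rfl | hlt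
    · exact le_rfl
    have hne : (s.filter fun η => ζ < η ∧ η ≤ ζ').Nonempty :=
      ⟨ζ', Finset.mem_filter.2 ⟨hζ', hlt, le_rfl⟩⟩
    set T := s.filter fun η => ζ < η ∧ η ≤ ζ' with hT
    set η := T.min' hne with hη
    have hηT : η ∈ T := T.min'_mem hne
    have hηs : η ∈ s := (Finset.mem_filter.1 hηT).1
    have hζη : ζ < η := (Finset.mem_filter.1 hηT).2.1
    have hηζ' : η ≤ ζ' := (Finset.mem_filter.1 hηT).2.2
    have hcons : ConsecIn s ζ η := by
      refine ⟨hζη, fun μ hμ hc => ?_⟩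
      have hμT : μ ∈ T := Finset.mem_filter.2 ⟨hμ, hc.1, hc.2.le.trans hηζ'⟩
      exact absurd (T.min'_le μ hμT) (not_le.2 hc.2)
    have step : w ζ ≤ w η := h ζ hζ η hηs h1 (hηζ'.trans h3) hcons
    refine step.trans (ih η hηs ζ' hζ' ?_ (h1.trans hζη.le) hηζ' h3)
    have hsub : (s.filter fun μ => η < μ ∧ μ ≤ ζ') ⊆ T.erase η := by
      intro μ hμ
      rw [Finset.mem_filter] at hμ
      exact Finset.mem_erase.2 ⟨(hμ.2.1).ne', Finset.mem_filter.2
        ⟨hμ.1, hζη.trans hμ.2.1, hμ.2.2⟩⟩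
    have h1' := Finset.card_le_card hsub
    have h2' := Finset.card_erase_of_mem hηT
    omega

lemma IsUp.le {F : ι → Set α} {s : Finset ι} {w : ι → α} {i j : ι}
    (h : IsUp F s w i j) {ζ ζ' : ι} (hζ : ζ ∈ s) (hζ' : ζ' ∈ s)
    (h1 : i ≤ ζ) (h2 : ζ ≤ ζ') (h3 : ζ' ≤ j) : w ζ ≤ w ζ' :=
  consec_mono h.2 ζ hζ ζ' hζ' h1 h2 h3

lemma IsUp.restrict {F : ι → Set α} {s : Finset ι} {w : ι → α} {i j i' j' : ι}
    (h : IsUp F s w i j) (h1 : i ≤ i') (h2 : j' ≤ j) : IsUp F s w i' j' :=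
  ⟨fun ζ hζ a b => h.1 ζ hζ (h1.trans a) (b.trans h2),
   fun ζ hζ ζ' hζ' a b c => h.2 ζ hζ ζ' hζ' (h1.trans a) (b.trans h2) c⟩

lemma IsUp.updateLeft {F : ι → Set α} {s : Finset ι} {w : ι → α} {i j : ι} {x : α}
    (h : IsUp F s w i j) (hx : x ∈ F i) (hle : x ≤ w i) :
    IsUp F s (Function.update w i x) i j := by
  constructor
  · intro ζ hζ a b
    rcases eq_or_ne ζ i with rfl | hne
    · rw [Function.update_self]; exact hx
    · rw [Function.update_of_ne hne]; exact h.1 ζ hζ a b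
  · intro ζ hζ ζ' hζ' a b hc
    have hζ'i : ζ' ≠ i := (lt_of_le_of_lt a hc.1).ne'
    rw [Function.update_of_ne hζ'i]
    rcases eq_or_ne ζ i with rfl | hne
    · rw [Function.update_self]
      exact hle.trans (h.2 ζ hζ ζ' hζ' a b hc)
    · rw [Function.update_of_ne hne]
      exact h.2 ζ hζ ζ' hζ' a b hc

lemma IsUp.updateRight {F : ι → Set α} {s : Finset ι} {w : ι → α} {i j : ι} {z : α}
    (h : IsUp F s w i j) (hz : z ∈ F j) (hle : w j ≤ z) :
    IsUp F s (Function.update w j z) i j := by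
  constructor
  · intro ζ hζ a b
    rcases eq_or_ne ζ j with rfl | hne
    · rw [Function.update_self]; exact hz
    · rw [Function.update_of_ne hne]; exact h.1 ζ hζ a b
  · intro ζ hζ ζ' hζ' a b hc
    have hζj : ζ ≠ j := (lt_of_lt_of_le hc.1 b).ne
    rw [Function.update_of_ne hζj]
    rcases eq_or_ne ζ' j with rfl | hne
    · rw [Function.update_self]
      exact (h.2 ζ hζ ζ' hζ' a b hc).trans hle
    · rw [Function.update_of_ne hne]
      exact h.2 ζ hζ ζ' hζ' a b hc

lemma IsUp.glue {F : ι → Set α} {s : Finset ι} {w w' : ι → α} {i j k : ι}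
    (h1 : IsUp F s w i j) (h2 : IsUp F s w' j k) (hj : j ∈ s) (heq : w j = w' j) :
    IsUp F s (fun ζ => if ζ ≤ j then w ζ else w' ζ) i k := by
  constructor
  · intro ζ hζ a b
    by_cases hζj : ζ ≤ j
    · simp only [if_pos hζj]; exact h1.1 ζ hζ a hζj
    · simp only [if_neg hζj]; exact h2.1 ζ hζ (le_of_not_ge hζj) b
  · intro ζ hζ ζ' hζ' a b hc
    by_cases hζj : ζ ≤ j
    · by_cases hζ'j : ζ' ≤ j
      · simp only [if_pos hζj, if_pos hζ'j]
        exact h1.2 ζ hζ ζ' hζ' a hζ'j hc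
      · simp only [if_pos hζj, if_neg hζ'j]
        have hjζ' : j < ζ' := lt_of_not_ge hζ'j
        rcases eq_or_lt_of_le hζj with rfl | hζltj
        · rw [heq]
          exact h2.2 ζ hζ ζ' hζ' le_rfl b hc
        · exact absurd ⟨hζltj, hjζ'⟩ (hc.2 j hj)
    · have hjζ : j < ζ := lt_of_not_ge hζj
      have hζ'j : ¬ ζ' ≤ j := fun hh => hζj (le_of_lt (lt_of_lt_of_le hc.1 hh))
      simp only [if_neg hζj, if_neg hζ'j]
      exact h2.2 ζ hζ ζ' hζ' hjζ.le b hc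


/-- `x` and `y` are connected by a bridge or a chain between fibers `F i` and `F j`. -/
def Conn (A : Set α) (F : ι → Set α) (s : Finset ι) (i j : ι) (x y : α) : Prop :=
  x ≤ y ∧ i ∈ s ∧ j ∈ s ∧ x ∈ F i ∧ y ∈ F j ∧
  ((∃ a ∈ A, x ≤ a ∧ a ≤ y) ∨
   (i < j ∧ ∃ w : ι → α, w i = x ∧ w j = y ∧ IsUp F s w i j) ∨
   i = j ∨
   (j < i ∧ ∃ w : ι → α, w j = y ∧ w i = x ∧ IsUp (α := αᵒᵈ) F s w j i))

lemma conn_trans {A : Set α} {F : ι → Set α} {s : Finset ι} {i j k : ι} {x y z : α}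
    (h1 : Conn A F s i j x y) (h2 : Conn A F s j k y z) :
    Conn A F s i k x z := by
  obtain ⟨hxy, hi, hj, hxF, hyF, hd1⟩ := h1
  obtain ⟨hyz, hj', hk, hyF', hzF, hd2⟩ := h2
  refine ⟨hxy.trans hyz, hi, hk, hxF, hzF, ?_⟩
  rcases hd1 with ⟨a, ha, hxa, hay⟩ | hd1
  · exact Or.inl ⟨a, ha, hxa, hay.trans hyz⟩
  rcases hd2 with ⟨a, ha, hya, haz⟩ | hd2
  · exact Or.inl ⟨a, ha, hxy.trans hya, haz⟩
  rcases hd1 with ⟨hij, w, hwi, hwj, hw⟩ | rfl | ⟨hji, w, hwj, hwi, hw⟩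
  · -- first leg: up chain from i to j
    rcases hd2 with ⟨hjk, w', hw'j, hw'k, hw'⟩ | rfl | ⟨hkj, w', hw'k, hw'j, hw'⟩
    · -- up, up : glue
      refine Or.inr (Or.inl ⟨hij.trans hjk, fun ζ => if ζ ≤ j then w ζ else w' ζ, ?_, ?_,
        hw.glue hw' hj (hwj.trans hw'j.symm)⟩)
      · simp only [if_pos hij.le]; exact hwi
      · simp only [if_neg (not_le.2 hjk)]; exact hw'k
    · -- up, eq : update right endpoint with z
      refine Or.inr (Or.inl ⟨hij, Function.update w j z, ?_, Function.update_self _ _ _,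
        hw.updateRight hzF (hwj ▸ hyz)⟩)
      rw [Function.update_of_ne hij.ne]; exact hwi
    · -- up (i<j), down (k<j) : compare i and k
      rcases lt_trichotomy i k with hik | rfl | hki
      · -- result: up from i to k
        have hwk_le : w k ≤ z := by
          have l1 : w k ≤ w j := hw.le hk hj hik.le hkj.le le_rfl
          have l2 : w' j ≤ w' k := (IsUp.le (α := αᵒᵈ) hw' hk hj le_rfl hkj.le le_rfl : _)
          rw [hwj] at l1
          rw [hw'j, hw'k] at l2
          exact l1.trans l2
        refine Or.inr (Or.inl ⟨hik, Function.update w k z, ?_, Function.update_self _ _ _,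
          (hw.restrict le_rfl hkj.le).updateRight hzF hwk_le⟩)
        rw [Function.update_of_ne hik.ne]; exact hwi
      · exact Or.inr (Or.inr (Or.inl rfl))
      · -- result: down from k to i
        have hx_le : x ≤ w' i := by
          have l2 : w' j ≤ w' i := (IsUp.le (α := αᵒᵈ) hw' hi hj hki.le hij.le le_rfl : _)
          rw [hw'j] at l2
          exact hxy.trans l2
        refine Or.inr (Or.inr (Or.inr ⟨hki, Function.update w' i x, ?_,
          Function.update_self _ _ _,
          IsUp.updateRight (α := αᵒᵈ) (IsUp.restrict (α := αᵒᵈ) hw' le_rfl hij.le) hxF hx_le⟩))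
        rw [Function.update_of_ne hki.ne]; exact hw'k
  · -- first leg: i = j (subst)
    rcases hd2 with ⟨hjk, w', hw'j, hw'k, hw'⟩ | rfl | ⟨hkj, w', hw'k, hw'j, hw'⟩
    · -- eq, up : update left endpoint with x
      refine Or.inr (Or.inl ⟨hjk, Function.update w' i x, Function.update_self _ _ _, ?_,
        hw'.updateLeft hxF (hw'j ▸ hxy)⟩)
      rw [Function.update_of_ne hjk.ne']; exact hw'k
    · exact Or.inr (Or.inr (Or.inl rfl))
    · -- eq, down : update right endpoint (top index i) with x
      refine Or.inr (Or.inr (Or.inr ⟨hkj, Function.update w' i x, ?_,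
        Function.update_self _ _ _,
        IsUp.updateRight (α := αᵒᵈ) hw' hxF (show x ≤ w' i from hw'j ▸ hxy)⟩))
      rw [Function.update_of_ne hkj.ne]; exact hw'k
  · -- first leg: down chain (j < i)
    rcases hd2 with ⟨hjk, w', hw'j, hw'k, hw'⟩ | rfl | ⟨hkj, w', hw'k, hw'j, hw'⟩
    · -- down (j<i), up (j<k) : compare i and k
      rcases lt_trichotomy i k with hik | rfl | hki
      · -- result: up from i to k
        have hx_le : x ≤ w' i := by
          have l2 : w' j ≤ w' i := hw'.le hj hi le_rfl hji.le hik.le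
          rw [hw'j] at l2
          exact hxy.trans l2
        refine Or.inr (Or.inl ⟨hik, Function.update w' i x, Function.update_self _ _ _, ?_,
          (hw'.restrict hji.le le_rfl).updateLeft hxF hx_le⟩)
        rw [Function.update_of_ne hik.ne']; exact hw'k
      · exact Or.inr (Or.inr (Or.inl rfl))
      · -- result: down from k to i
        have hwk_le : w k ≤ z := by
          have l1 : w k ≤ w j := (IsUp.le (α := αᵒᵈ) hw hj hk le_rfl hjk.le hki.le : _)
          rw [hwj] at l1
          exact l1.trans hyz
        refine Or.inr (Or.inr (Or.inr ⟨hki, Function.update w k z,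
          Function.update_self _ _ _, ?_,
          IsUp.updateLeft (α := αᵒᵈ) (IsUp.restrict (α := αᵒᵈ) hw hjk.le le_rfl) hzF hwk_le⟩))
        rw [Function.update_of_ne hki.ne']; exact hwi
    · -- down, eq : update left (bottom index j) with z
      refine Or.inr (Or.inr (Or.inr ⟨hji, Function.update w j z,
        Function.update_self _ _ _, ?_,
        IsUp.updateLeft (α := αᵒᵈ) hw hzF (show w j ≤ z from hwj ▸ hyz)⟩))
      rw [Function.update_of_ne hji.ne']; exact hwi
    · -- down, down : glue in the dual
      refine Or.inr (Or.inr (Or.inr ⟨hkj.trans hji,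
        fun ζ => if ζ ≤ j then w' ζ else w ζ, ?_, ?_,
        IsUp.glue (α := αᵒᵈ) hw' hw hj (hw'j.trans hwj.symm)⟩))
      · simp only [if_pos hkj.le]; exact hw'k
      · simp only [if_neg (not_le.2 hji)]; exact hwi

lemma conn_depl {A : Set α} {F : ι → Set α} {s : Finset ι} {i j : ι} {x y : α}
    (h : Conn A F s i j x y) : Depl A F s x y := by
  obtain ⟨hxy, hi, hj, hx, hy, hd⟩ := h
  refine ⟨hxy, ?_⟩
  rcases hd with hbr | ⟨hij, w, h1, h2, hup⟩ | rfl | ⟨hji, w, h1, h2, hup⟩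
  · rcases lt_trichotomy i j with hij | rfl | hji
    · exact Or.inr (Or.inl ⟨i, hi, j, hj, hij, hx, hy, Or.inl hbr⟩)
    · exact Or.inl ⟨i, hi, Or.inr hx, Or.inr hy⟩
    · exact Or.inr (Or.inr ⟨i, hi, j, hj, hji, hx, hy, Or.inl hbr⟩)
  · exact Or.inr (Or.inl ⟨i, hi, j, hj, hij, hx, hy, Or.inr ⟨w, h1, h2, hup.1, hup.2⟩⟩)
  · exact Or.inl ⟨i, hi, Or.inr hx, Or.inr hy⟩
  · exact Or.inr (Or.inr ⟨i, hi, j, hj, hji, hx, hy, Or.inr ⟨w, h1, h2, hup.1, hup.2⟩⟩)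

lemma depl_cases {A : Set α} {F : ι → Set α} {s : Finset ι} {x y : α}
    (h : Depl A F s x y) :
    (∃ ξ ∈ s, x ∈ A ∪ F ξ ∧ y ∈ A ∪ F ξ) ∨ ∃ i j, Conn A F s i j x y := by
  obtain ⟨hxy, hc⟩ := h
  rcases hc with h | ⟨i, hi, j, hj, hij, hx, hy, hbc⟩ | ⟨i, hi, j, hj, hji, hx, hy, hbc⟩
  · exact Or.inl h
  · refine Or.inr ⟨i, j, hxy, hi, hj, hx, hy, ?_⟩
    rcases hbc with hbr | ⟨w, h1, h2, h3, h4⟩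
    · exact Or.inl hbr
    · exact Or.inr (Or.inl ⟨hij, w, h1, h2, h3, h4⟩)
  · refine Or.inr ⟨i, j, hxy, hi, hj, hx, hy, ?_⟩
    rcases hbc with hbr | ⟨w, h1, h2, h3, h4⟩
    · exact Or.inl hbr
    · exact Or.inr (Or.inr (Or.inr ⟨hji, w, h1, h2, (h3 : _), (h4 : _)⟩))

end Helpers

/-- If the finite linearly ordered index set `s` has at least two elements, the depletion
`≪_s` of `≤` is a partial order on `E = A ∪ ⋃_{ξ ∈ s} F ξ` (reflexive, antisymmetric,
transitive) whose graph is included in the graph of `≤`. -/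
theorem stmt5 [PartialOrder α] [LinearOrder ι] (A : Set α) (F : ι → Set α)
    (s : Finset ι) (hcard : 2 ≤ s.card)
    (hAF : ∀ ξ ∈ s, Disjoint A (F ξ))
    (hFF : ∀ ξ ∈ s, ∀ η ∈ s, ξ ≠ η → Disjoint (F ξ) (F η)) :
    (∀ x ∈ A ∪ ⋃ ξ ∈ s, F ξ, Depl A F s x x) ∧
    (∀ x ∈ A ∪ ⋃ ξ ∈ s, F ξ, ∀ y ∈ A ∪ ⋃ ξ ∈ s, F ξ,
      Depl A F s x y → Depl A F s y x → x = y) ∧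
    (∀ x ∈ A ∪ ⋃ ξ ∈ s, F ξ, ∀ y ∈ A ∪ ⋃ ξ ∈ s, F ξ, ∀ z ∈ A ∪ ⋃ ξ ∈ s, F ξ,
      Depl A F s x y → Depl A F s y z → Depl A F s x z) ∧
    (∀ x y : α, Depl A F s x y → x ≤ y) := by
  have hsne : s.Nonempty := Finset.card_pos.1 (by omega)
  refine ⟨?_, ?_, ?_, fun x y h => h.1⟩
  · -- reflexivity
    intro x hx
    rcases hx with hx | hx
    · exact ⟨le_rfl, Or.inl ⟨hsne.choose, hsne.choose_spec, Or.inl hx, Or.inl hx⟩⟩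
    · simp only [Set.mem_iUnion] at hx
      obtain ⟨ξ, hξ, hx⟩ := hx
      exact ⟨le_rfl, Or.inl ⟨ξ, hξ, Or.inr hx, Or.inr hx⟩⟩
  · -- antisymmetry
    intro x _ y _ h1 h2
    exact le_antisymm h1.1 h2.1
  · -- transitivity
    intro x _ y _ z _ hxy hyz
    have hlxy : x ≤ y := hxy.1
    have hlyz : y ≤ z := hyz.1
    rcases depl_cases hxy with ⟨ξ, hξ, hxA, hyA⟩ | ⟨i, j, hc1⟩
    · rcases depl_cases hyz with ⟨η, hη, hyB, hzB⟩ | ⟨j', k, hc2⟩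
      · -- (1,1)
        rcases hxA with hx | hx
        · exact ⟨hlxy.trans hlyz, Or.inl ⟨η, hη, Or.inl hx, hzB⟩⟩
        rcases hzB with hz | hz
        · exact ⟨hlxy.trans hlyz, Or.inl ⟨ξ, hξ, Or.inr hx, Or.inl hz⟩⟩
        rcases hyA with hyA' | hyA'
        · exact conn_depl ⟨hlxy.trans hlyz, hξ, hη, hx, hz, Or.inl ⟨y, hyA', hlxy, hlyz⟩⟩
        rcases hyB with hyB' | hyB'
        · exact absurd hyB' (fun hh => Set.disjoint_left.1 (hAF ξ hξ) hh hyA')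
        have hξη : ξ = η := by
          by_contra hne
          exact Set.disjoint_left.1 (hFF ξ hξ η hη hne) hyA' hyB'
        subst hξη
        exact ⟨hlxy.trans hlyz, Or.inl ⟨ξ, hξ, Or.inr hx, Or.inr hz⟩⟩
      · -- (1, Conn)
        have hj' := hc2.2.1
        have hk := hc2.2.2.1
        have hyF := hc2.2.2.2.1
        have hzF := hc2.2.2.2.2.1
        rcases hxA with hx | hx
        · exact ⟨hlxy.trans hlyz, Or.inl ⟨k, hk, Or.inl hx, Or.inr hzF⟩⟩
        rcases hyA with hyA' | hyA'
        · exact absurd hyA' (fun hh => Set.disjoint_left.1 (hAF j' hj') hh hyF)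
        have hξj' : ξ = j' := by
          by_contra hne
          exact Set.disjoint_left.1 (hFF ξ hξ j' hj' hne) hyA' hyF
        subst hξj'
        exact conn_depl (conn_trans ⟨hlxy, hξ, hξ, hx, hyA', Or.inr (Or.inr (Or.inl rfl))⟩ hc2)
    · rcases depl_cases hyz with ⟨η, hη, hyB, hzB⟩ | ⟨j', k, hc2⟩
      · -- (Conn, 1)
        have hi := hc1.2.1
        have hj := hc1.2.2.1
        have hxF := hc1.2.2.2.1
        have hyF := hc1.2.2.2.2.1
        rcases hzB with hz | hz
        · exact ⟨hlxy.trans hlyz, Or.inl ⟨i, hi, Or.inr hxF, Or.inl hz⟩⟩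
        rcases hyB with hyB' | hyB'
        · exact absurd hyB' (fun hh => Set.disjoint_left.1 (hAF j hj) hh hyF)
        have hjη : j = η := by
          by_contra hne
          exact Set.disjoint_left.1 (hFF j hj η hη hne) hyF hyB'
        subst hjη
        exact conn_depl (conn_trans hc1 ⟨hlyz, hη, hη, hyF, hz, Or.inr (Or.inr (Or.inl rfl))⟩)
      · -- (Conn, Conn)
        have hj := hc1.2.2.1
        have hyF := hc1.2.2.2.2.1
        have hj' := hc2.2.1
        have hyF' := hc2.2.2.2.1
        have hjj' : j = j' := by
          by_contra hne
          exact Set.disjoint_left.1 (hFF j hj j' hj' hne) hyF hyF'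
        subst hjj'
        exact conn_depl (conn_trans hc1 hc2)
end

section
/- Let I be a linearly ordered set, let A and F(ξ), for ξ ∈ I, be pairwise disjoint sets, and let ≤ be a partial order on a set including A ∪ ⋃_{ξ∈I} F(ξ). If s ⊆ t are finite subsets of I with |s| ≥ 2, then for any two elements x and y of A ∪ ⋃_{ξ∈s} F(ξ), x ≪_t y implies x ≪_s y. -/
variable {α ι : Type*}

/-- Chaining lemma: if consecutive steps in `t` are increasing, then any pair is. -/
lemma chain_le [PartialOrder α] [LinearOrder ι] (t : Finset ι) (i j : ι) (w : ι → α)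
    (h : ∀ ζ ∈ t, ∀ ζ' ∈ t, i ≤ ζ → ζ' ≤ j → ConsecIn t ζ ζ' → w ζ ≤ w ζ') :
    ∀ n : ℕ, ∀ ζ ∈ t, ∀ ζ' ∈ t, i ≤ ζ → ζ' ≤ j → ζ ≤ ζ' →
      (t.filter (fun η => ζ < η ∧ η ≤ ζ')).card ≤ n → w ζ ≤ w ζ' := by
  intro n
  induction n with
  | zero =>
    intro ζ hζ ζ' hζ' _ _ hle hcard
    rcases eq_or_lt_of_le hle with rfl | hlt
    · exact le_refl _
    · exfalso
      have hmem : ζ' ∈ t.filter (fun η => ζ < η ∧ η ≤ ζ') := by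
        simp [hζ', hlt]
      have := Finset.card_pos.mpr ⟨ζ', hmem⟩
      omega
  | succ n ih =>
    intro ζ hζ ζ' hζ' hi hj hle hcard
    rcases eq_or_lt_of_le hle with rfl | hlt
    · exact le_refl _
    · have hS : (t.filter (fun η => ζ < η ∧ η ≤ ζ')).Nonempty := ⟨ζ', by simp [hζ', hlt]⟩
      set η := (t.filter (fun η => ζ < η ∧ η ≤ ζ')).min' hS with hη
      have hηS := Finset.min'_mem _ hS
      rw [Finset.mem_filter] at hηS
      obtain ⟨hηt, ⟨hζη, hηζ'⟩⟩ := hηS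
      have consec : ConsecIn t ζ η := by
        refine ⟨hζη, fun θ hθ hcon => ?_⟩
        have : η ≤ θ := Finset.min'_le _ θ (by
          simp only [Finset.mem_filter]
          exact ⟨hθ, hcon.1, le_trans hcon.2.le hηζ'⟩)
        exact absurd this (not_le.mpr hcon.2)
      have step : w ζ ≤ w η := h ζ hζ η hηt hi (le_trans hηζ' hj) consec
      have hsub : t.filter (fun θ => η < θ ∧ θ ≤ ζ') ⊂ t.filter (fun θ => ζ < θ ∧ θ ≤ ζ') := by
        refine Finset.ssubset_iff_of_subset ?_ |>.mpr ⟨η, Finset.mem_filter.mpr ⟨hηt, hζη, hηζ'⟩, by simp⟩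
        intro θ hθ
        rw [Finset.mem_filter] at hθ ⊢
        exact ⟨hθ.1, lt_trans hζη hθ.2.1, hθ.2.2⟩
      have hcard' : (t.filter (fun θ => η < θ ∧ θ ≤ ζ')).card ≤ n := by
        have := Finset.card_lt_card hsub
        omega
      exact le_trans step (ih η hηt ζ' hζ' (le_trans hi hζη.le) hj hηζ' hcard')

/-- If `s ⊆ t` are finite subsets of the index set and `|s| ≥ 2`, then for any two
elements `x, y` of `A ∪ ⋃_{ξ ∈ s} F ξ`, `x ≪_t y` implies `x ≪_s y`. -/
theorem stmt6 [PartialOrder α] [LinearOrder ι] (A : Set α) (F : ι → Set α)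
    (hAF : ∀ ξ : ι, Disjoint A (F ξ))
    (hFF : ∀ ξ η : ι, ξ ≠ η → Disjoint (F ξ) (F η))
    (s t : Finset ι) (hst : s ⊆ t) (hcard : 2 ≤ s.card) :
    ∀ x ∈ A ∪ ⋃ ξ ∈ s, F ξ, ∀ y ∈ A ∪ ⋃ ξ ∈ s, F ξ,
      Depl A F t x y → Depl A F s x y := by
  have hsne : s.Nonempty := Finset.card_pos.mp (by omega)
  -- if z is in the big set and in F i, then i ∈ s
  have key : ∀ z : α, z ∈ A ∪ ⋃ ξ ∈ s, F ξ → ∀ i : ι, z ∈ F i → i ∈ s := by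
    intro z hz i hzi
    rcases hz with hz | hz
    · exact absurd hzi (Set.disjoint_left.mp (hAF i) hz)
    · simp only [Set.mem_iUnion] at hz
      obtain ⟨ξ, hξs, hzξ⟩ := hz
      rcases eq_or_ne ξ i with rfl | hne
      · exact hξs
      · exact absurd hzi (Set.disjoint_left.mp (hFF ξ i hne) hzξ)
  intro x hx y hy ⟨hxy, hcase⟩
  refine ⟨hxy, ?_⟩
  rcases hcase with ⟨ξ, hξt, hxξ, hyξ⟩ | ⟨i, hit, j, hjt, hij, hxi, hyj, hrest⟩ |
    ⟨i, hit, j, hjt, hji, hxi, hyj, hrest⟩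
  · -- case 1
    rcases hxξ with hxA | hxF
    · rcases hyξ with hyA | hyF
      · obtain ⟨ξ₀, hξ₀⟩ := hsne
        exact Or.inl ⟨ξ₀, hξ₀, Or.inl hxA, Or.inl hyA⟩
      · have hξs := key y hy ξ hyF
        exact Or.inl ⟨ξ, hξs, Or.inl hxA, Or.inr hyF⟩
    · have hξs := key x hx ξ hxF
      exact Or.inl ⟨ξ, hξs, Or.inr hxF, hyξ⟩
  · -- case 2: ascending
    have his := key x hx i hxi
    have hjs := key y hy j hyj
    refine Or.inr (Or.inl ⟨i, his, j, hjs, hij, hxi, hyj, ?_⟩)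
    rcases hrest with ha | ⟨w, hwi, hwj, hwF, hwmono⟩
    · exact Or.inl ha
    · refine Or.inr ⟨w, hwi, hwj, fun ζ hζ h1 h2 => hwF ζ (hst hζ) h1 h2, ?_⟩
      intro ζ hζ ζ' hζ' h1 h2 hcon
      exact chain_le t i j w hwmono _ ζ (hst hζ) ζ' (hst hζ') h1 h2 hcon.1.le le_rfl
  · -- case 3: descending
    have his := key x hx i hxi
    have hjs := key y hy j hyj
    refine Or.inr (Or.inr ⟨i, his, j, hjs, hji, hxi, hyj, ?_⟩)
    rcases hrest with ha | ⟨w, hwj, hwi, hwF, hwmono⟩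
    · exact Or.inl ha
    · refine Or.inr ⟨w, hwj, hwi, fun ζ hζ h1 h2 => hwF ζ (hst hζ) h1 h2, ?_⟩
      intro ζ hζ ζ' hζ' h1 h2 hcon
      exact chain_le (α := αᵒᵈ) t j i w hwmono _ ζ (hst hζ) ζ' (hst hζ') h1 h2 hcon.1.le le_rfl
end

section
/- Let I be a linearly ordered set, let A and F(ξ), for ξ ∈ I, be pairwise disjoint sets, and let ≤ be a partial order on a set including A ∪ ⋃_{ξ∈I} F(ξ). If s ⊆ t are finite subsets of I with |s| ≥ 2 and s is convex in t (i.e., whenever ξ < η < ζ are in t and ξ, ζ ∈ s, then η ∈ s), then ≪_s agrees with the restriction of ≪_t to A ∪ ⋃_{ξ∈s} F(ξ). -/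
variable {α ι : Type*}

lemma mem_idx_of_mem_F [PartialOrder α] {A : Set α} {F : ι → Set α}
    (hAF : ∀ ξ : ι, Disjoint A (F ξ))
    (hFF : ∀ ξ η : ι, ξ ≠ η → Disjoint (F ξ) (F η))
    {s : Finset ι} {x : α} (hx : x ∈ A ∪ ⋃ ξ ∈ s, F ξ) {i : ι} (hxi : x ∈ F i) :
    i ∈ s := by
  rcases hx with hx | hx
  · exact absurd rfl ((hAF i).ne_of_mem hx hxi)
  · simp only [Set.mem_iUnion] at hx
    obtain ⟨ξ, hξ, hxξ⟩ := hx
    rcases eq_or_ne i ξ with rfl | hne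
    · exact hξ
    · exact absurd rfl ((hFF ξ i (Ne.symm hne)).ne_of_mem hxξ hxi)

/-- If `s ⊆ t` are finite subsets of the index set, `|s| ≥ 2`, and `s` is convex in `t`
(whenever `ξ < η < ζ` are in `t` and `ξ, ζ ∈ s` then `η ∈ s`), then `≪_s` agrees with the
restriction of `≪_t` to `A ∪ ⋃_{ξ ∈ s} F ξ`. -/
theorem stmt7 [PartialOrder α] [LinearOrder ι] (A : Set α) (F : ι → Set α)
    (hAF : ∀ ξ : ι, Disjoint A (F ξ))
    (hFF : ∀ ξ η : ι, ξ ≠ η → Disjoint (F ξ) (F η))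
    (s t : Finset ι) (hst : s ⊆ t) (hcard : 2 ≤ s.card)
    (hconvex : ∀ ξ ∈ s, ∀ ζ ∈ s, ∀ η ∈ t, ξ < η → η < ζ → η ∈ s) :
    ∀ x ∈ A ∪ ⋃ ξ ∈ s, F ξ, ∀ y ∈ A ∪ ⋃ ξ ∈ s, F ξ,
      (Depl A F s x y ↔ Depl A F t x y) := by
  intro x hx y hy
  -- helper: interval membership transfers from t to s
  have hmid : ∀ i ∈ s, ∀ j ∈ s, ∀ ζ ∈ t, i ≤ ζ → ζ ≤ j → ζ ∈ s := by
    intro i hi j hj ζ hζ h1 h2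
    rcases h1.eq_or_lt with rfl | h1
    · exact hi
    rcases h2.eq_or_lt with rfl | h2
    · exact hj
    exact hconvex i hi j hj ζ hζ h1 h2
  constructor
  · rintro ⟨hle, h⟩
    refine ⟨hle, ?_⟩
    rcases h with ⟨ξ, hξ, h1, h2⟩ | ⟨i, hi, j, hj, hij, hxi, hyj, hc⟩ |
        ⟨i, hi, j, hj, hij, hxi, hyj, hc⟩
    · exact Or.inl ⟨ξ, hst hξ, h1, h2⟩
    · refine Or.inr (Or.inl ⟨i, hst hi, j, hst hj, hij, hxi, hyj, ?_⟩)
      rcases hc with hc | ⟨w, hwi, hwj, hwF, hwm⟩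
      · exact Or.inl hc
      refine Or.inr ⟨w, hwi, hwj, ?_, ?_⟩
      · intro ζ hζ h1 h2
        exact hwF ζ (hmid i hi j hj ζ hζ h1 h2) h1 h2
      · intro ζ hζ ζ' hζ' h1 h2 hcons
        have hlt := hcons.1
        have hζs : ζ ∈ s := hmid i hi j hj ζ hζ h1 (hlt.le.trans h2)
        have hζ's : ζ' ∈ s := hmid i hi j hj ζ' hζ' (h1.trans hlt.le) h2
        exact hwm ζ hζs ζ' hζ's h1 h2 ⟨hlt, fun η hη => hcons.2 η (hst hη)⟩
    · refine Or.inr (Or.inr ⟨i, hst hi, j, hst hj, hij, hxi, hyj, ?_⟩)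
      rcases hc with hc | ⟨w, hwj, hwi, hwF, hwm⟩
      · exact Or.inl hc
      refine Or.inr ⟨w, hwj, hwi, ?_, ?_⟩
      · intro ζ hζ h1 h2
        exact hwF ζ (hmid j hj i hi ζ hζ h1 h2) h1 h2
      · intro ζ hζ ζ' hζ' h1 h2 hcons
        have hlt := hcons.1
        have hζs : ζ ∈ s := hmid j hj i hi ζ hζ h1 (hlt.le.trans h2)
        have hζ's : ζ' ∈ s := hmid j hj i hi ζ' hζ' (h1.trans hlt.le) h2
        exact hwm ζ hζs ζ' hζ's h1 h2 ⟨hlt, fun η hη => hcons.2 η (hst hη)⟩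
  · rintro ⟨hle, h⟩
    refine ⟨hle, ?_⟩
    -- consecutive in s implies consecutive in t, for pairs in s
    have hconsec : ∀ ζ ∈ s, ∀ ζ' ∈ s, ConsecIn s ζ ζ' → ConsecIn t ζ ζ' := by
      intro ζ hζ ζ' hζ' hcons
      refine ⟨hcons.1, fun η hη ⟨h1, h2⟩ =>
        hcons.2 η (hconvex ζ hζ ζ' hζ' η hη h1 h2) ⟨h1, h2⟩⟩
    rcases h with ⟨ξ, hξ, h1, h2⟩ | ⟨i, hi, j, hj, hij, hxi, hyj, hc⟩ |
        ⟨i, hi, j, hj, hij, hxi, hyj, hc⟩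
    · rcases h1 with h1 | h1
      · rcases h2 with h2 | h2
        · obtain ⟨ξ0, hξ0⟩ := Finset.card_pos.mp (lt_of_lt_of_le two_pos hcard)
          exact Or.inl ⟨ξ0, hξ0, Or.inl h1, Or.inl h2⟩
        · have hξs := mem_idx_of_mem_F hAF hFF hy h2
          exact Or.inl ⟨ξ, hξs, Or.inl h1, Or.inr h2⟩
      · have hξs := mem_idx_of_mem_F hAF hFF hx h1
        exact Or.inl ⟨ξ, hξs, Or.inr h1, h2⟩
    · have his := mem_idx_of_mem_F hAF hFF hx hxi
      have hjs := mem_idx_of_mem_F hAF hFF hy hyj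
      refine Or.inr (Or.inl ⟨i, his, j, hjs, hij, hxi, hyj, ?_⟩)
      rcases hc with hc | ⟨w, hwi, hwj, hwF, hwm⟩
      · exact Or.inl hc
      refine Or.inr ⟨w, hwi, hwj, fun ζ hζ h1 h2 => hwF ζ (hst hζ) h1 h2,
        fun ζ hζ ζ' hζ' h1 h2 hcons =>
          hwm ζ (hst hζ) ζ' (hst hζ') h1 h2 (hconsec ζ hζ ζ' hζ' hcons)⟩
    · have his := mem_idx_of_mem_F hAF hFF hx hxi
      have hjs := mem_idx_of_mem_F hAF hFF hy hyj
      refine Or.inr (Or.inr ⟨i, his, j, hjs, hij, hxi, hyj, ?_⟩)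
      rcases hc with hc | ⟨w, hwj, hwi, hwF, hwm⟩
      · exact Or.inl hc
      refine Or.inr ⟨w, hwj, hwi, fun ζ hζ h1 h2 => hwF ζ (hst hζ) h1 h2,
        fun ζ hζ ζ' hζ' h1 h2 hcons =>
          hwm ζ (hst hζ) ζ' (hst hζ') h1 h2 (hconsec ζ hζ ζ' hζ' hcons)⟩
end

section
/- Suppose κ is an uncountable cardinal, A and F(ξ), for ξ < κ, are pairwise disjoint sets with A countable and each F(ξ) finite, and ≤ is a partial order on E := A ∪ ⋃_{ξ<κ} F(ξ) such that E has neither κ-chains nor κ*-chains. Then there exists a cofinal set X ⊆ κ such that for any two distinct elements ξ and η of X there is a finite set s ⊆ κ with {ξ, η} = {min(s), max(s)} and there is no s-walk whose two endpoints are in F(ξ) and F(η). -/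
variable {α ι : Type*}

/-- An increasing `s`-walk: a family `w` with `w ζ ∈ F ζ` for `ζ ∈ s`, increasing on
consecutive elements of `s`. -/
def IsIncWalkOn [Preorder α] [LinearOrder ι] (F : ι → Set α) (s : Finset ι)
    (w : ι → α) : Prop :=
  (∀ ζ ∈ s, w ζ ∈ F ζ) ∧
  ∀ ζ ∈ s, ∀ ζ' ∈ s, ζ < ζ' → (∀ η ∈ s, ¬(ζ < η ∧ η < ζ')) → w ζ ≤ w ζ'

/-- A decreasing `s`-walk: a family `w` with `w ζ ∈ F ζ` for `ζ ∈ s`, decreasing on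
consecutive elements of `s`. -/
def IsDecWalkOn [Preorder α] [LinearOrder ι] (F : ι → Set α) (s : Finset ι)
    (w : ι → α) : Prop :=
  (∀ ζ ∈ s, w ζ ∈ F ζ) ∧
  ∀ ζ ∈ s, ∀ ζ' ∈ s, ζ < ζ' → (∀ η ∈ s, ¬(ζ < η ∧ η < ζ')) → w ζ' ≤ w ζ

/-- An `s`-walk is a family which is either an increasing or a decreasing walk;
its endpoints are its values at `min s` and `max s`. -/
def IsWalkOn [Preorder α] [LinearOrder ι] (F : ι → Set α) (s : Finset ι)
    (w : ι → α) : Prop :=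
  IsIncWalkOn F s w ∨ IsDecWalkOn F s w

section Walks
variable [PartialOrder α] [LinearOrder ι] {F : ι → Set α} {s t : Finset ι} {w : ι → α}

theorem IsIncWalkOn.le (h : IsIncWalkOn F s w) :
    ∀ ζ ∈ s, ∀ ζ' ∈ s, ζ ≤ ζ' → w ζ ≤ w ζ' := by
  classical
  have key : ∀ n ζ, ζ ∈ s → ∀ ζ' ∈ s, ζ ≤ ζ' →
      (s.filter fun η => ζ < η ∧ η ≤ ζ').card ≤ n → w ζ ≤ w ζ' := by
    intro n
    induction n with
    | zero =>
      intro ζ hζ ζ' hζ' hle hcard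
      rcases eq_or_lt_of_le hle with rfl | hlt
      · rfl
      · exfalso
        have hmem : ζ' ∈ s.filter fun η => ζ < η ∧ η ≤ ζ' := by
          simp [hζ', hlt]
        have := Finset.card_pos.mpr ⟨ζ', hmem⟩
        omega
    | succ n ih =>
      intro ζ hζ ζ' hζ' hle hcard
      rcases eq_or_lt_of_le hle with rfl | hlt
      · rfl
      · set M := s.filter fun η => ζ < η ∧ η ≤ ζ' with hM
        have hMne : M.Nonempty := ⟨ζ', by simp [hM, hζ', hlt]⟩
        set m := M.min' hMne with hm
        have hmM : m ∈ M := Finset.min'_mem _ _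
        have hms : m ∈ s := (Finset.mem_filter.mp hmM).1
        have hζm : ζ < m := (Finset.mem_filter.mp hmM).2.1
        have hmζ' : m ≤ ζ' := (Finset.mem_filter.mp hmM).2.2
        have h1 : w ζ ≤ w m := by
          refine h.2 ζ hζ m hms hζm ?_
          rintro η hη ⟨hη1, hη2⟩
          have hηM : η ∈ M := by
            refine Finset.mem_filter.mpr ⟨hη, hη1, hη2.le.trans hmζ'⟩
          exact absurd (Finset.min'_le _ _ hηM) (not_le.mpr hη2)
        refine h1.trans (ih m hms ζ' hζ' hmζ' ?_)
        have hsub : (s.filter fun η => m < η ∧ η ≤ ζ') ⊆ M.erase m := by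
          intro η hη
          rw [Finset.mem_filter] at hη
          refine Finset.mem_erase.mpr ⟨by exact (ne_of_gt hη.2.1), ?_⟩
          exact Finset.mem_filter.mpr ⟨hη.1, hζm.trans hη.2.1, hη.2.2⟩
        have h2 := Finset.card_le_card hsub
        have h3 : (M.erase m).card ≤ M.card - 1 := by
          rw [Finset.card_erase_of_mem hmM]
        omega
  intro ζ hζ ζ' hζ' hle
  exact key _ ζ hζ ζ' hζ' hle le_rfl

theorem IsIncWalkOn.subset (h : IsIncWalkOn F s w) (hts : t ⊆ s) : IsIncWalkOn F t w :=
  ⟨fun ζ hζ => h.1 ζ (hts hζ), fun ζ hζ ζ' hζ' hlt _ =>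
    h.le ζ (hts hζ) ζ' (hts hζ') hlt.le⟩

theorem isDecWalkOn_dual_iff :
    IsDecWalkOn F s w ↔
      IsIncWalkOn (α := αᵒᵈ) (fun i => OrderDual.ofDual ⁻¹' F i) s
        (fun i => OrderDual.toDual (w i)) :=
  Iff.rfl

theorem IsDecWalkOn.ge (h : IsDecWalkOn F s w) :
    ∀ ζ ∈ s, ∀ ζ' ∈ s, ζ ≤ ζ' → w ζ' ≤ w ζ := by
  intro ζ hζ ζ' hζ' hle
  exact (isDecWalkOn_dual_iff.mp h).le ζ hζ ζ' hζ' hle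

theorem IsDecWalkOn.subset (h : IsDecWalkOn F s w) (hts : t ⊆ s) : IsDecWalkOn F t w :=
  isDecWalkOn_dual_iff.mpr ((isDecWalkOn_dual_iff.mp h).subset hts)

theorem IsWalkOn.subset (h : IsWalkOn F s w) (hts : t ⊆ s) : IsWalkOn F t w :=
  h.elim (fun h => Or.inl (h.subset hts)) (fun h => Or.inr (h.subset hts))

end Walks

section Rels
variable [PartialOrder α] [LinearOrder ι]

def RInc (F : ι → Set α) (ξ η : ι) : Prop :=
  ∀ s : Finset ι, ξ ∈ s → η ∈ s → ↑s ⊆ Set.Icc ξ η → ∃ w, IsIncWalkOn F s w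

def RDec (F : ι → Set α) (ξ η : ι) : Prop :=
  ∀ s : Finset ι, ξ ∈ s → η ∈ s → ↑s ⊆ Set.Icc ξ η → ∃ w, IsDecWalkOn F s w

def RWalk (F : ι → Set α) (ξ η : ι) : Prop :=
  ∀ s : Finset ι, ξ ∈ s → η ∈ s → ↑s ⊆ Set.Icc ξ η → ∃ w, IsWalkOn F s w

variable {F : ι → Set α} {ξ η η' : ι}

private lemma insert_subset_Icc (h1 : ξ ≤ η) (h2 : η ≤ η') {s : Finset ι}
    (hsub : ↑s ⊆ Set.Icc ξ η) : ↑(insert η' s) ⊆ Set.Icc ξ η' := by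
  intro x hx
  rw [Finset.coe_insert, Set.mem_insert_iff] at hx
  rcases hx with rfl | hx
  · exact ⟨h1.trans h2, le_rfl⟩
  · exact ⟨(hsub hx).1, (hsub hx).2.trans h2⟩

lemma RInc.down (h : RInc F ξ η') (h1 : ξ ≤ η) (h2 : η ≤ η') : RInc F ξ η := by
  classical
  intro s hξ hη hsub
  obtain ⟨w, hw⟩ := h (insert η' s) (Finset.mem_insert_of_mem hξ)
    (Finset.mem_insert_self _ _) (insert_subset_Icc h1 h2 hsub)
  exact ⟨w, hw.subset (Finset.subset_insert _ _)⟩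

lemma RDec.down (h : RDec F ξ η') (h1 : ξ ≤ η) (h2 : η ≤ η') : RDec F ξ η := by
  classical
  intro s hξ hη hsub
  obtain ⟨w, hw⟩ := h (insert η' s) (Finset.mem_insert_of_mem hξ)
    (Finset.mem_insert_self _ _) (insert_subset_Icc h1 h2 hsub)
  exact ⟨w, hw.subset (Finset.subset_insert _ _)⟩

lemma RWalk.down (h : RWalk F ξ η') (h1 : ξ ≤ η) (h2 : η ≤ η') : RWalk F ξ η := by
  classical
  intro s hξ hη hsub
  obtain ⟨w, hw⟩ := h (insert η' s) (Finset.mem_insert_of_mem hξ)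
    (Finset.mem_insert_self _ _) (insert_subset_Icc h1 h2 hsub)
  exact ⟨w, hw.subset (Finset.subset_insert _ _)⟩

lemma RWalk.or (h : RWalk F ξ η) : RInc F ξ η ∨ RDec F ξ η := by
  classical
  by_contra hc
  push_neg at hc
  obtain ⟨h1, h2⟩ := hc
  simp only [RInc, not_forall] at h1
  simp only [RDec, not_forall] at h2
  obtain ⟨s₁, hξ₁, hη₁, hsub₁, hno₁⟩ := h1
  obtain ⟨s₂, hξ₂, hη₂, hsub₂, hno₂⟩ := h2
  obtain ⟨w, hw⟩ := h (s₁ ∪ s₂) (Finset.mem_union_left _ hξ₁)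
    (Finset.mem_union_left _ hη₁)
    (by rw [Finset.coe_union]; exact Set.union_subset hsub₁ hsub₂)
  rcases hw with hw | hw
  · exact hno₁ ⟨w, hw.subset Finset.subset_union_left⟩
  · exact hno₂ ⟨w, hw.subset Finset.subset_union_right⟩

end Rels

section Ord

private lemma exists_embed {κ : Cardinal} (hκ : Cardinal.aleph0 ≤ κ) (γ : κ.ord.ToType) :
    ∃ e : κ.ord.ToType → κ.ord.ToType, StrictMono e ∧ ∀ i, γ < e i := by
  set eI := Ordinal.ToType.mk (o := κ.ord) with heI
  set b : Ordinal := (eI.symm γ).1 with hb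
  have hbκ : b < κ.ord := (eI.symm γ).2
  have hprin : Ordinal.IsPrincipal (· + ·) κ.ord := Ordinal.isPrincipal_add_ord hκ
  have h1κ : (1 : Ordinal) < κ.ord := by
    have := Cardinal.isSuccLimit_ord hκ
    exact lt_of_lt_of_le Ordinal.one_lt_omega0 (Ordinal.omega0_le_of_isSuccLimit this)
  have hlt : ∀ i : κ.ord.ToType, b + 1 + (eI.symm i).1 < κ.ord := fun i =>
    hprin (hprin hbκ h1κ) (eI.symm i).2
  refine ⟨fun i => eI ⟨b + 1 + (eI.symm i).1, hlt i⟩, ?_, ?_⟩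
  · intro i j hij
    have : (eI.symm i).1 < (eI.symm j).1 := by
      exact_mod_cast eI.symm.strictMono hij
    have h2 : b + 1 + (eI.symm i).1 < b + 1 + (eI.symm j).1 :=
      (add_lt_add_iff_left _).mpr this
    exact eI.strictMono (Subtype.mk_lt_mk.mpr h2)
  · intro i
    have hγ : γ = eI (eI.symm γ) := (eI.apply_symm_apply γ).symm
    rw [hγ]
    refine eI.strictMono (Subtype.mk_lt_mk.mpr ?_)
    calc b < b + 1 := by rw [Ordinal.add_one_eq_succ]; exact Order.lt_succ b
    _ ≤ b + 1 + (eI.symm i).1 := le_self_add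

private lemma exists_gt {κ : Cardinal} (hκ : Cardinal.aleph0 ≤ κ) (i : κ.ord.ToType) :
    ∃ j, i < j := by
  obtain ⟨e, -, h2⟩ := exists_embed hκ i
  exact ⟨e i, h2 i⟩

private lemma bounded_of_small {κ : Cardinal} {T : Set κ.ord.ToType}
    (hT : Cardinal.mk T < (κ.ord).cof) : ∃ b, ∀ x ∈ T, x < b := by
  haveI hwo : IsWellOrder κ.ord.ToType (· < ·) := isWellOrder_lt
  by_contra h
  push_neg at h
  have hc : IsCofinal T := fun b => h b
  exact absurd (Order.cof_le hc) (by rw [Ordinal.cof_toType]; exact not_le.mpr hT)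

end Ord

section CaseB

private lemma caseB_core {β : Type*} [PartialOrder β] [Nonempty β] {κ : Cardinal}
    (hκ : Cardinal.aleph0 ≤ κ) (F : κ.ord.ToType → Set β) (hFfin : ∀ ξ, (F ξ).Finite)
    (hFF : ∀ ξ η, ξ ≠ η → Disjoint (F ξ) (F η)) (γ : κ.ord.ToType)
    (hwalk : ∀ s : Finset κ.ord.ToType, s.Nonempty → ↑s ⊆ Set.Ioi γ →
      ∃ w, IsIncWalkOn F s w) :
    ∃ g : κ.ord.ToType → β, (∀ i, g i ∈ ⋃ ξ, F ξ) ∧ StrictMono g := by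
  classical
  let P := {s : Finset κ.ord.ToType // ↑s ⊆ Set.Ioi γ}
  haveI : Nonempty P := ⟨⟨∅, by simp⟩⟩
  haveI hdir : IsDirected P (· ≤ ·) := ⟨fun p q =>
    ⟨⟨p.1 ∪ q.1, by rw [Finset.coe_union]; exact Set.union_subset p.2 q.2⟩,
      Subtype.coe_le_coe.mp (by exact Finset.subset_union_left),
      Subtype.coe_le_coe.mp (by exact Finset.subset_union_right)⟩⟩
  haveI hnb : Filter.NeBot (Filter.atTop : Filter P) :=
    Filter.atTop_neBot_iff.mpr ⟨inferInstance, hdir⟩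
  set U : Ultrafilter P := Ultrafilter.of Filter.atTop with hUdef
  have hU : (U : Filter P) ≤ Filter.atTop := Ultrafilter.of_le _
  set wsel : P → κ.ord.ToType → β := fun p =>
    if h : p.1.Nonempty then (hwalk p.1 h p.2).choose else fun _ => Classical.arbitrary β
    with hwseldef
  have hwsel : ∀ p : P, p.1.Nonempty → IsIncWalkOn F p.1 (wsel p) := by
    intro p hp
    simp only [hwseldef, dif_pos hp]
    exact (hwalk p.1 hp p.2).choose_spec
  have hmemζ : ∀ ζ : κ.ord.ToType, γ < ζ → {p : P | ζ ∈ p.1} ∈ U := by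
    intro ζ hζ
    have h1 : {p : P | (⟨{ζ}, by simpa using hζ⟩ : P) ≤ p} ∈ (Filter.atTop : Filter P) :=
      Filter.mem_atTop _
    refine Filter.mem_of_superset (hU h1) ?_
    intro p hp
    have hsub : ({ζ} : Finset κ.ord.ToType) ≤ p.1 := hp
    exact hsub (Finset.mem_singleton_self ζ)
  have key : ∀ ζ : κ.ord.ToType, γ < ζ →
      ∃ x, x ∈ F ζ ∧ {p : P | ζ ∈ p.1 ∧ wsel p ζ = x} ∈ U := by
    intro ζ hζ
    have h2 : {p : P | ζ ∈ p.1} ⊆ ⋃ x ∈ F ζ, {p : P | ζ ∈ p.1 ∧ wsel p ζ = x} := by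
      intro p hp
      have hne : p.1.Nonempty := ⟨ζ, hp⟩
      exact Set.mem_biUnion ((hwsel p hne).1 ζ hp) ⟨hp, rfl⟩
    have h3 : (⋃ x ∈ F ζ, {p : P | ζ ∈ p.1 ∧ wsel p ζ = x}) ∈ U :=
      Filter.mem_of_superset (hmemζ ζ hζ) h2
    exact (Ultrafilter.finite_biUnion_mem_iff (hFfin ζ)).mp h3
  set v : κ.ord.ToType → β := fun ζ =>
    if h : γ < ζ then (key ζ h).choose else Classical.arbitrary β with hvdef
  have hv : ∀ ζ (h : γ < ζ), v ζ ∈ F ζ ∧ {p : P | ζ ∈ p.1 ∧ wsel p ζ = v ζ} ∈ U := by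
    intro ζ h
    simp only [hvdef, dif_pos h]
    exact ⟨(key ζ h).choose_spec.1, (key ζ h).choose_spec.2⟩
  have hmono : ∀ ζ ζ', γ < ζ → γ < ζ' → ζ < ζ' → v ζ < v ζ' := by
    intro ζ ζ' h1 h2 hlt
    have hs : ({p : P | ζ ∈ p.1 ∧ wsel p ζ = v ζ} ∩
        {p : P | ζ' ∈ p.1 ∧ wsel p ζ' = v ζ'}) ∈ U :=
      Filter.inter_mem (hv ζ h1).2 (hv ζ' h2).2
    obtain ⟨p, ⟨hp1, hp2⟩, hp3, hp4⟩ := Ultrafilter.nonempty_of_mem hs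
    have hW := hwsel p ⟨ζ, hp1⟩
    have hle : wsel p ζ ≤ wsel p ζ' := hW.le ζ hp1 ζ' hp3 hlt.le
    rw [hp2, hp4] at hle
    refine lt_of_le_of_ne hle ?_
    intro heq
    have hmem := (hv ζ h1).1
    rw [heq] at hmem
    exact (Set.disjoint_left.mp (hFF ζ ζ' hlt.ne) hmem) (hv ζ' h2).1
  obtain ⟨e, he1, he2⟩ := exists_embed hκ γ
  exact ⟨fun i => v (e i), fun i => Set.mem_iUnion.mpr ⟨e i, (hv (e i) (he2 i)).1⟩,
    fun i j hij => hmono _ _ (he2 i) (he2 j) (he1 hij)⟩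

end CaseB

section CaseA

open Classical in
private noncomputable def betaFn [PartialOrder α] [LinearOrder ι] (F : ι → Set α) (ξ : ι) : ι :=
  if h : ∃ β, ∀ η, β ≤ η → ¬ RWalk F ξ η then h.choose else ξ

private lemma betaFn_spec [PartialOrder α] [LinearOrder ι] {F : ι → Set α} {ξ : ι}
    (h : ∃ β, ∀ η, β ≤ η → ¬ RWalk F ξ η) :
    ∀ η, betaFn F ξ ≤ η → ¬ RWalk F ξ η := by
  classical
  simp only [betaFn, dif_pos h]
  exact h.choose_spec

private lemma caseA [PartialOrder α] {κ : Cardinal} (hκ : Cardinal.aleph0 ≤ κ)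
    (F : κ.ord.ToType → Set α)
    (hCA : ∀ γ : κ.ord.ToType, ∃ ξ, γ < ξ ∧ ∃ β, ∀ η, β ≤ η → ¬ RWalk F ξ η) :
    ∃ X : Set κ.ord.ToType, (∀ i, ∃ x ∈ X, i ≤ x) ∧
      ∀ ξ ∈ X, ∀ η ∈ X, ξ < η → ¬ RWalk F ξ η := by
  classical
  haveI hwo : IsWellOrder κ.ord.ToType (· < ·) := isWellOrder_lt
  obtain ⟨S, hSunb, hScard⟩ := Order.exists_cof_eq κ.ord.ToType
  rw [Ordinal.cof_toType] at hScard
  set J := ((κ.ord).cof).ord.ToType with hJ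
  haveI hwoJ : IsWellOrder J (· < ·) := isWellOrder_lt
  have hmkJ : Cardinal.mk J = (κ.ord).cof := Cardinal.mk_ord_toType _
  obtain ⟨e0⟩ : Nonempty (J ≃ S) := Cardinal.eq.mp (by rw [hmkJ, hScard])
  have hcof0 : Cardinal.aleph0 ≤ (κ.ord).cof :=
    Ordinal.aleph0_le_cof.mpr (Cardinal.isSuccLimit_ord hκ)
  have step : ∀ (j : J) (ih : ∀ j', j' < j → κ.ord.ToType), ∃ ξ : κ.ord.ToType,
      (∃ β, ∀ η, β ≤ η → ¬ RWalk F ξ η) ∧ (e0 j : κ.ord.ToType) < ξ ∧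
        ∀ j' (h : j' < j), ih j' h < ξ ∧ betaFn F (ih j' h) < ξ := by
    intro j ih
    set T : Set κ.ord.ToType := (Set.range fun p : {j' // j' < j} => ih p.1 p.2) ∪
      ((Set.range fun p : {j' // j' < j} => betaFn F (ih p.1 p.2)) ∪
        {(e0 j : κ.ord.ToType)}) with hT
    have hsmall : Cardinal.mk {j' // j' < j} < (κ.ord).cof := by
      have h1 : Ordinal.typein ((· < ·) : J → J → Prop) j < Ordinal.type ((· < ·) : J → J → Prop) :=
        Ordinal.typein_lt_type _ j
      rw [Ordinal.type_toType] at h1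
      have h2 := Cardinal.lt_ord.mp h1
      exact h2
    have hcard : Cardinal.mk T < (κ.ord).cof := by
      have hA := Cardinal.mk_range_le (f := fun p : {j' // j' < j} => ih p.1 p.2)
      have hB := Cardinal.mk_range_le (f := fun p : {j' // j' < j} => betaFn F (ih p.1 p.2))
      have hC : Cardinal.mk ({(e0 j : κ.ord.ToType)} : Set κ.ord.ToType) = 1 :=
        Cardinal.mk_singleton _
      have h1 : Cardinal.mk T ≤ Cardinal.mk {j' // j' < j} +
          (Cardinal.mk {j' // j' < j} + 1) := by
        refine (Cardinal.mk_union_le _ _).trans (add_le_add hA ?_)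
        refine (Cardinal.mk_union_le _ _).trans (add_le_add hB ?_)
        rw [hC]
      refine h1.trans_lt ?_
      refine Cardinal.add_lt_of_lt hcof0 hsmall (Cardinal.add_lt_of_lt hcof0 hsmall ?_)
      exact lt_of_lt_of_le Cardinal.one_lt_aleph0 hcof0
    obtain ⟨b, hb⟩ := bounded_of_small hcard
    obtain ⟨ξ, hbξ, hG⟩ := hCA b
    refine ⟨ξ, hG, ?_, ?_⟩
    · exact (hb _ (Or.inr (Or.inr rfl))).trans hbξ
    · intro j' h
      constructor
      · exact (hb _ (Or.inl ⟨⟨j', h⟩, rfl⟩)).trans hbξ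
      · exact (hb _ (Or.inr (Or.inl ⟨⟨j', h⟩, rfl⟩))).trans hbξ
  have wfJ : WellFounded ((· < ·) : J → J → Prop) := IsWellFounded.wf
  set f : J → κ.ord.ToType := wfJ.fix (fun j ih => (step j ih).choose) with hfdef
  have hfix : ∀ j : J, f j = (step j (fun j' _ => f j')).choose := by
    intro j
    exact wfJ.fix_eq _ j
  have hfspec : ∀ j : J, (∃ β, ∀ η, β ≤ η → ¬ RWalk F (f j) η) ∧
      (e0 j : κ.ord.ToType) < f j ∧
      ∀ j' (h : j' < j), f j' < f j ∧ betaFn F (f j') < f j := by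
    intro j
    rw [hfix j]
    exact (step j fun j' _ => f j').choose_spec
  refine ⟨Set.range f, ?_, ?_⟩
  · intro i
    obtain ⟨sb, hsbS, hsb⟩ := hSunb i
    refine ⟨f (e0.symm ⟨sb, hsbS⟩), Set.mem_range_self _, ?_⟩
    have h2 : (e0 (e0.symm ⟨sb, hsbS⟩) : κ.ord.ToType) = sb := by
      rw [Equiv.apply_symm_apply]
    have h3 := (hfspec (e0.symm ⟨sb, hsbS⟩)).2.1
    rw [h2] at h3
    exact hsb.trans h3.le
  · rintro ξ ⟨j₁, rfl⟩ η ⟨j₂, rfl⟩ hlt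
    rcases lt_trichotomy j₁ j₂ with h | h | h
    · have hβ := ((hfspec j₂).2.2 j₁ h).2
      exact betaFn_spec (hfspec j₁).1 (f j₂) hβ.le
    · subst h
      exact absurd hlt (lt_irrefl _)
    · exact absurd hlt (asymm ((hfspec j₁).2.2 j₂ h).1)

end CaseA

/-- Suppose `κ` is an uncountable cardinal, `A` and `F ξ` (for `ξ < κ`) are pairwise
disjoint, `A` is countable, each `F ξ` is finite, and the partially ordered set
`E = A ∪ ⋃_{ξ<κ} F ξ` has neither `κ`-chains nor `κ*`-chains.  Then there is a cofinal
`X ⊆ κ` such that for any distinct `ξ, η ∈ X` there is a finite `s ⊆ κ` with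
`{ξ, η} = {min s, max s}` and no `s`-walk with endpoints in `F ξ` and `F η`. -/
theorem stmt8 [PartialOrder α] (κ : Cardinal) (hκ : Cardinal.aleph0 < κ)
    (A : Set α) (F : κ.ord.ToType → Set α)
    (hA : A.Countable) (hFfin : ∀ ξ, (F ξ).Finite)
    (hAF : ∀ ξ, Disjoint A (F ξ))
    (hFF : ∀ ξ η, ξ ≠ η → Disjoint (F ξ) (F η))
    (hnoinc : ¬ ∃ g : κ.ord.ToType → α, (∀ i, g i ∈ A ∪ ⋃ ξ, F ξ) ∧ StrictMono g)
    (hnodec : ¬ ∃ g : κ.ord.ToType → α, (∀ i, g i ∈ A ∪ ⋃ ξ, F ξ) ∧ StrictAnti g) :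
    ∃ X : Set κ.ord.ToType, (∀ i, ∃ x ∈ X, i ≤ x) ∧
      ∀ ξ ∈ X, ∀ η ∈ X, ξ ≠ η →
        ∃ (s : Finset κ.ord.ToType) (hs : s.Nonempty),
          ({ξ, η} : Set κ.ord.ToType) = {s.min' hs, s.max' hs} ∧
          ¬ ∃ w : κ.ord.ToType → α, IsWalkOn F s w ∧
            ((w (s.min' hs) ∈ F ξ ∧ w (s.max' hs) ∈ F η) ∨
             (w (s.min' hs) ∈ F η ∧ w (s.max' hs) ∈ F ξ)) := by
  classical
  have hκ' : Cardinal.aleph0 ≤ κ := hκ.le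
  by_cases hCA : ∀ γ : κ.ord.ToType, ∃ ξ, γ < ξ ∧ ∃ β, ∀ η, β ≤ η → ¬ RWalk F ξ η
  · obtain ⟨X, hX1, hX2⟩ := caseA hκ' F hCA
    refine ⟨X, hX1, ?_⟩
    have key : ∀ ξ ∈ X, ∀ η ∈ X, ξ < η → ∃ (s : Finset κ.ord.ToType) (hs : s.Nonempty),
        s.min' hs = ξ ∧ s.max' hs = η ∧ ¬ ∃ w, IsWalkOn F s w := by
      intro ξ hξ η hη hlt
      have hnR := hX2 ξ hξ η hη hlt
      simp only [RWalk, not_forall] at hnR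
      obtain ⟨s, hξs, hηs, hsub, hno⟩ := hnR
      have hs : s.Nonempty := ⟨ξ, hξs⟩
      refine ⟨s, hs, ?_, ?_, hno⟩
      · exact le_antisymm (Finset.min'_le _ _ hξs)
          (Finset.le_min' _ _ _ fun y hy => (hsub hy).1)
      · exact le_antisymm (Finset.max'_le _ _ _ fun y hy => (hsub hy).2)
          (Finset.le_max' _ _ hηs)
    intro ξ hξ η hη hne
    rcases hne.lt_or_gt with hlt | hlt
    · obtain ⟨s, hs, h1, h2, hno⟩ := key ξ hξ η hη hlt
      exact ⟨s, hs, by rw [h1, h2], by rintro ⟨w, hw, -⟩; exact hno ⟨w, hw⟩⟩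
    · obtain ⟨s, hs, h1, h2, hno⟩ := key η hη ξ hξ hlt
      refine ⟨s, hs, ?_, by rintro ⟨w, hw, -⟩; exact hno ⟨w, hw⟩⟩
      rw [h1, h2, Set.pair_comm]
  · exfalso
    push_neg at hCA
    obtain ⟨γ, hγ⟩ := hCA
    obtain ⟨ξ₀, hξ₀⟩ := exists_gt hκ' γ
    have hRall : ∀ η, ξ₀ < η → RWalk F ξ₀ η := by
      intro η hη
      obtain ⟨η', hη', hR⟩ := hγ ξ₀ hξ₀ η
      exact hR.down hη.le hη'
    haveI hne : Nonempty α := by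
      obtain ⟨η, hη⟩ := exists_gt hκ' ξ₀
      obtain ⟨w, -⟩ := hRall η hη {ξ₀, η} (by simp) (by simp) (by
        intro x hx
        simp only [Finset.coe_insert, Finset.coe_singleton, Set.mem_insert_iff,
          Set.mem_singleton_iff] at hx
        rcases hx with rfl | rfl
        · exact ⟨le_rfl, hη.le⟩
        · exact ⟨hη.le, le_rfl⟩)
      exact ⟨w ξ₀⟩
    have hsplit : (∀ η, ξ₀ < η → RInc F ξ₀ η) ∨ (∀ η, ξ₀ < η → RDec F ξ₀ η) := by
      by_contra hc
      push_neg at hc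
      obtain ⟨⟨η₁, hη₁, hn₁⟩, ⟨η₂, hη₂, hn₂⟩⟩ := hc
      obtain ⟨η₃, hη₃⟩ := exists_gt hκ' (max η₁ η₂)
      have h₁₃ : η₁ ≤ η₃ := (le_max_left _ _).trans hη₃.le
      have h₂₃ : η₂ ≤ η₃ := (le_max_right _ _).trans hη₃.le
      have hξ₃ : ξ₀ < η₃ := hη₁.trans_le h₁₃
      rcases (hRall η₃ hξ₃).or with h | h
      · exact hn₁ (h.down hη₁.le h₁₃)
      · exact hn₂ (h.down hη₂.le h₂₃)
    rcases hsplit with hInc | hDec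
    · have hwalk : ∀ s : Finset κ.ord.ToType, s.Nonempty → ↑s ⊆ Set.Ioi ξ₀ →
          ∃ w, IsIncWalkOn F s w := by
        intro s hsne hsub
        have hηm : ξ₀ < s.max' hsne := hsub (s.max'_mem hsne)
        obtain ⟨w, hw⟩ := hInc (s.max' hsne) hηm (insert ξ₀ s)
          (Finset.mem_insert_self _ _) (Finset.mem_insert_of_mem (s.max'_mem hsne)) (by
            intro x hx
            rw [Finset.coe_insert, Set.mem_insert_iff] at hx
            rcases hx with rfl | hx
            · exact ⟨le_rfl, hηm.le⟩
            · exact ⟨(hsub hx).le, Finset.le_max' _ _ hx⟩)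
        exact ⟨w, hw.subset (Finset.subset_insert _ _)⟩
      obtain ⟨g, hg1, hg2⟩ := caseB_core hκ' F hFfin hFF ξ₀ hwalk
      exact hnoinc ⟨g, fun i => Set.mem_union_right _ (hg1 i), hg2⟩
    · set F' : κ.ord.ToType → Set αᵒᵈ := fun ζ => OrderDual.ofDual ⁻¹' F ζ with hF'
      have hwalk : ∀ s : Finset κ.ord.ToType, s.Nonempty → ↑s ⊆ Set.Ioi ξ₀ →
          ∃ w : κ.ord.ToType → αᵒᵈ, IsIncWalkOn F' s w := by
        intro s hsne hsub
        have hηm : ξ₀ < s.max' hsne := hsub (s.max'_mem hsne)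
        obtain ⟨w, hw⟩ := hDec (s.max' hsne) hηm (insert ξ₀ s)
          (Finset.mem_insert_self _ _) (Finset.mem_insert_of_mem (s.max'_mem hsne)) (by
            intro x hx
            rw [Finset.coe_insert, Set.mem_insert_iff] at hx
            rcases hx with rfl | hx
            · exact ⟨le_rfl, hηm.le⟩
            · exact ⟨(hsub hx).le, Finset.le_max' _ _ hx⟩)
        have hw' : IsDecWalkOn F s w := hw.subset (Finset.subset_insert _ _)
        exact ⟨fun i => OrderDual.toDual (w i), isDecWalkOn_dual_iff.mp hw'⟩
      have hFfin' : ∀ ξ, (F' ξ).Finite := fun ξ =>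
        (hFfin ξ).preimage (OrderDual.ofDual.injective.injOn)
      have hFF' : ∀ ξ η, ξ ≠ η → Disjoint (F' ξ) (F' η) := by
        intro ξ η hne'
        rw [Set.disjoint_left]
        intro a ha hb
        exact Set.disjoint_left.mp (hFF ξ η hne') ha hb
      obtain ⟨g, hg1, hg2⟩ := caseB_core (β := αᵒᵈ) hκ' F' hFfin' hFF' ξ₀ hwalk
      refine hnodec ⟨fun i => OrderDual.ofDual (g i), ?_, ?_⟩
      · intro i
        obtain ⟨t, ht⟩ := Set.mem_iUnion.mp (hg1 i)
        exact Set.mem_union_right _ (Set.mem_iUnion.mpr ⟨t, ht⟩)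
      · intro i j hij
        exact hg2 hij
end

section
/- For every partially ordered set (E, ≤_E), the poset ℍ_E has precaliber κ for every uncountable regular cardinal κ: for every family (p_ξ)_{ξ<κ} of conditions in ℍ_E there exists a set S ⊆ κ of cardinality κ such that for every finite subset u of S the conditions p_ξ, for ξ ∈ u, have a common lower bound in ℍ_E. -/
open Cardinal Set

universe u v


lemma hcond_fiber {ι : Type u} {κ : Cardinal.{u}} {C : Type v} [Countable C]
    (hreg : κ.IsRegular) (hκ : Cardinal.aleph0 < κ)
    (A : Set ι) (hA : Cardinal.mk A = κ) (g : ι → C) :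
    ∃ c : C, Cardinal.mk {ξ ∈ A | g ξ = c} = κ := by
  by_contra h
  push_neg at h
  have hlt : ∀ c : C, Cardinal.mk {ξ ∈ A | g ξ = c} < κ := fun c =>
    lt_of_le_of_ne (hA ▸ mk_le_mk_of_subset (sep_subset _ _)) (h c)
  obtain ⟨e, he⟩ := exists_injective_nat C
  set F : ULift.{u} ℕ → Set ι := fun m => {ξ ∈ A | e (g ξ) = m.down} with hF
  have hsub : A ⊆ ⋃ m, F m := fun ξ hξ => mem_iUnion.2 ⟨⟨e (g ξ)⟩, hξ, rfl⟩
  have hN : #(ULift.{u} ℕ) = ℵ₀ := by simp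
  have hFlt : ∀ m, #(F m) < κ := by
    intro m
    rcases eq_empty_or_nonempty (F m) with h0 | ⟨ξ0, hξ0⟩
    · rw [h0]; simpa using hκ.trans_le' (by simp [aleph0_pos.le]) |>.trans_le le_rfl
    · refine lt_of_le_of_lt (mk_le_mk_of_subset (fun ξ hξ => ?_)) (hlt (g ξ0))
      exact ⟨hξ.1, he (hξ.2.trans hξ0.2.symm)⟩
  have : #A ≤ #(ULift.{u} ℕ) * ⨆ m, #(F m) :=
    le_trans (mk_le_mk_of_subset hsub) (mk_iUnion_le F)
  have hsup : (⨆ m, #(F m)) < κ :=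
    Cardinal.iSup_lt_of_isRegular hreg (hN ▸ hκ) hFlt
  have : #A < κ := this.trans_lt (mul_lt_of_lt hreg.aleph0_le (hN ▸ hκ) hsup)
  exact absurd hA this.ne


lemma hcond_delta {ι : Type u} {κ : Cardinal.{u}}
    (hreg : κ.IsRegular) (hκ : Cardinal.aleph0 < κ) :
    ∀ (r : ℕ) {E : Type v} [DecidableEq E] (D : ι → Finset E) (A : Set ι),
      Cardinal.mk A = κ → (∀ ξ ∈ A, (D ξ).card = r) →
      ∃ S ⊆ A, Cardinal.mk S = κ ∧ ∃ R : Finset E,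
        ∀ ξ ∈ S, ∀ η ∈ S, ξ ≠ η → D ξ ∩ D η = R := by
  intro r
  induction r with
  | zero =>
    intro E _ D A hA hcard
    refine ⟨A, Subset.rfl, hA, ∅, fun ξ hξ η hη _ => ?_⟩
    rw [Finset.card_eq_zero.mp (hcard ξ hξ), Finset.empty_inter]
  | succ r ih =>
    intro E _ D A hA hcard
    by_cases hx : ∃ a : E, Cardinal.mk {ξ ∈ A | a ∈ D ξ} = κ
    · obtain ⟨a, ha⟩ := hx
      set A' : Set ι := {ξ ∈ A | a ∈ D ξ} with hA'
      have hcard' : ∀ ξ ∈ A', ((D ξ).erase a).card = r := by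
        intro ξ hξ
        rw [Finset.card_erase_of_mem hξ.2, hcard ξ hξ.1]; rfl
      obtain ⟨S, hSA', hS, R, hR⟩ := ih (fun ξ => (D ξ).erase a) A' ha hcard'
      refine ⟨S, hSA'.trans (sep_subset _ _), hS, insert a R, ?_⟩
      intro ξ hξ η hη hne
      have haξ : a ∈ D ξ := (hSA' hξ).2
      have haη : a ∈ D η := (hSA' hη).2
      have hRe := hR ξ hξ η hη hne
      ext x
      simp only [Finset.mem_inter, Finset.mem_insert]
      constructor
      · rintro ⟨h1, h2⟩
        by_cases hxa : x = a
        · exact Or.inl hxa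
        · refine Or.inr ?_
          rw [← hRe]
          exact Finset.mem_inter.2 ⟨Finset.mem_erase.2 ⟨hxa, h1⟩, Finset.mem_erase.2 ⟨hxa, h2⟩⟩
      · rintro (rfl | hxR)
        · exact ⟨haξ, haη⟩
        · rw [← hRe] at hxR
          have := Finset.mem_inter.mp hxR
          exact ⟨Finset.mem_of_mem_erase this.1, Finset.mem_of_mem_erase this.2⟩
    · push_neg at hx
      have hxlt : ∀ a : E, Cardinal.mk {ξ ∈ A | a ∈ D ξ} < κ := fun a =>
        lt_of_le_of_ne (hA ▸ mk_le_mk_of_subset (sep_subset _ _)) (hx a)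
      -- finite unions of small fibers are small
      have hfin : ∀ t : Finset E, Cardinal.mk {ξ ∈ A | ∃ a ∈ t, a ∈ D ξ} < κ := by
        intro t
        induction t using Finset.induction_on with
        | empty =>
          have : {ξ ∈ A | ∃ a ∈ (∅ : Finset E), a ∈ D ξ} = ∅ := by
            ext ξ; simp
          rw [this]; simpa using aleph0_pos.trans hκ
        | @insert b t _ iht =>
          have hsub : {ξ ∈ A | ∃ a ∈ insert b t, a ∈ D ξ} ⊆
              {ξ ∈ A | b ∈ D ξ} ∪ {ξ ∈ A | ∃ a ∈ t, a ∈ D ξ} := by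
            rintro ξ ⟨hξA, a, hat, haD⟩
            rcases Finset.mem_insert.mp hat with rfl | hat'
            · exact Or.inl ⟨hξA, haD⟩
            · exact Or.inr ⟨hξA, a, hat', haD⟩
          calc Cardinal.mk {ξ ∈ A | ∃ a ∈ insert b t, a ∈ D ξ}
              ≤ _ := mk_le_mk_of_subset hsub
            _ ≤ _ := mk_union_le _ _
            _ < κ := add_lt_of_lt hreg.aleph0_le (hxlt b) iht
      -- Zorn: maximal pairwise-disjoint subfamily
      set 𝒮 : Set (Set ι) :=
        {S | S ⊆ A ∧ S.Pairwise fun ξ η => Disjoint (D ξ) (D η)} with h𝒮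
      obtain ⟨m, -, hmem, hmax⟩ :
          ∃ m, (∅ : Set ι) ⊆ m ∧ m ∈ 𝒮 ∧ ∀ s ∈ 𝒮, m ⊆ s → s = m := by
        obtain ⟨m, hm0, hm⟩ := zorn_subset_nonempty 𝒮 (fun c hc hchain _ => by
          refine ⟨⋃₀ c, ⟨?_, ?_⟩, fun s hs => subset_sUnion_of_mem hs⟩
          · exact sUnion_subset fun s hs => (hc hs).1
          · intro ξ hξ η hη hne
            obtain ⟨s, hs, hξs⟩ := hξ
            obtain ⟨t, ht, hηt⟩ := hη
            rcases hchain.total hs ht with hst | hts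
            · exact (hc ht).2 (hst hξs) hηt hne
            · exact (hc hs).2 hξs (hts hηt) hne)
          ∅ ⟨empty_subset _, pairwise_empty _⟩
        exact ⟨m, hm0, hm.1, fun s hs hms => (hm.2 hs hms).antisymm hms⟩
      -- m has size κ
      have hmκ : Cardinal.mk m = κ := by
        by_contra hne
        have hmlt : Cardinal.mk m < κ :=
          lt_of_le_of_ne (hA ▸ mk_le_mk_of_subset hmem.1) hne
        set G : ι → Set ι := fun η => {ξ ∈ A | ¬ Disjoint (D ξ) (D η)} with hG
        have hGlt : ∀ η, Cardinal.mk (G η) < κ := by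
          intro η
          refine lt_of_le_of_lt (mk_le_mk_of_subset (fun ξ hξ => ?_)) (hfin (D η))
          obtain ⟨a, haξ, haη⟩ := Finset.not_disjoint_iff.mp hξ.2
          exact ⟨hξ.1, a, haη, haξ⟩
        have hsub : A ⊆ m ∪ ⋃ (η : m), G ↑η := by
          intro ξ hξ
          by_cases hξm : ξ ∈ m
          · exact Or.inl hξm
          · have hnp : ¬ ∀ η ∈ m, Disjoint (D ξ) (D η) := by
              intro hall
              have : insert ξ m ∈ 𝒮 := by
                refine ⟨insert_subset hξ hmem.1, hmem.2.insert fun η hη _ => ?_⟩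
                exact ⟨hall η hη, (hall η hη).symm⟩
              have := hmax _ this (subset_insert _ _)
              exact hξm (this ▸ mem_insert ξ m)
            push_neg at hnp
            obtain ⟨η, hηm, hnd⟩ := hnp
            exact Or.inr (mem_iUnion.2 ⟨⟨η, hηm⟩, hξ, hnd⟩)
        have h1 : #A ≤ #m + #(⋃ (η : m), G ↑η) :=
          (mk_le_mk_of_subset hsub).trans (mk_union_le _ _)
        have h2 : #(⋃ (η : m), G ↑η) ≤ #m * ⨆ (η : m), #(G ↑η) :=
          mk_iUnion_le _
        have hsup : (⨆ (η : m), #(G ↑η)) < κ :=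
          Cardinal.iSup_lt_of_isRegular hreg hmlt fun η => hGlt ↑η
        have : #A < κ := h1.trans_lt (add_lt_of_lt hreg.aleph0_le hmlt
          (h2.trans_lt (mul_lt_of_lt hreg.aleph0_le hmlt hsup)))
        exact absurd hA this.ne
      refine ⟨m, hmem.1, hmκ, ∅, fun ξ hξ η hη hne => ?_⟩
      exact Finset.disjoint_iff_inter_eq_empty.mp (hmem.2 hξ hη hne)



/-- A condition in the forcing notion `ℍ_E`: a triple `(D, n, f)` where `D` is a finite
subset of `E`, `n ∈ ℕ`, and `f` assigns to each `a ∈ D` a function on `{0, …, n-1}` with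
`f a 0 = 0` (when `n > 0`) and `f a j < j` for `1 ≤ j < n`. -/
structure HCond (E : Type*) where
  D : Finset E
  n : ℕ
  f : E → ℕ → ℕ
  f_zero : ∀ a ∈ D, 0 < n → f a 0 = 0
  f_lt : ∀ a ∈ D, ∀ j, 1 ≤ j → j < n → f a j < j

/-- `p` extends `q` in the forcing notion `ℍ_E`. -/
def HExt {E : Type*} [PartialOrder E] (p q : HCond E) : Prop :=
  q.D ⊆ p.D ∧ q.n ≤ p.n ∧
  (∀ a ∈ q.D, ∀ j < q.n, p.f a j = q.f a j) ∧
  (∀ a ∈ q.D, ∀ b ∈ q.D, a ≤ b → ∀ j, q.n ≤ j → j < p.n → p.f a j ≤ p.f b j)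

/-- For every partially ordered set `E`, the poset `ℍ_E` has precaliber `κ` for every
uncountable regular cardinal `κ`: any family of `κ` conditions has a subfamily of
cardinality `κ` every finite subset of which has a common lower bound. -/
theorem stmt10 {E : Type*} [PartialOrder E] (κ : Cardinal)
    (hκ : Cardinal.aleph0 < κ) (hreg : κ.IsRegular)
    (p : κ.ord.ToType → HCond E) :
    ∃ S : Set κ.ord.ToType, Cardinal.mk S = κ ∧
      ∀ u : Finset κ.ord.ToType, ↑u ⊆ S →
        ∃ q : HCond E, ∀ ξ ∈ u, HExt q (p ξ) := by
  classical
  have hTκ : Cardinal.mk (Set.univ : Set κ.ord.ToType) = κ := by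
    rw [mk_univ, mk_ord_toType]
  -- stabilize n
  obtain ⟨n, hA1⟩ := hcond_fiber hreg hκ Set.univ hTκ (fun ξ => (p ξ).n)
  set A1 : Set κ.ord.ToType := {ξ ∈ Set.univ | (p ξ).n = n} with hA1def
  -- stabilize card of D
  obtain ⟨r, hA2⟩ := hcond_fiber hreg hκ A1 hA1 (fun ξ => (p ξ).D.card)
  set A2 : Set κ.ord.ToType := {ξ ∈ A1 | (p ξ).D.card = r} with hA2def
  -- delta system
  obtain ⟨S0, hS0A2, hS0, R, hΔ⟩ :=
    hcond_delta hreg hκ r (fun ξ => (p ξ).D) A2 hA2 (fun ξ hξ => hξ.2)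
  -- stabilize pattern on R
  obtain ⟨c, hS⟩ := hcond_fiber hreg hκ S0 hS0
    (fun ξ => (fun (a : R) (j : Fin n) => (p ξ).f a j))
  set S : Set κ.ord.ToType := {ξ ∈ S0 | _} with hSdef
  have hSsub : S ⊆ S0 := sep_subset _ _
  have hn : ∀ ξ ∈ S, (p ξ).n = n := fun ξ hξ => (hS0A2 (hSsub hξ)).1.2
  have hpat : ∀ ξ ∈ S, ∀ η ∈ S, ∀ a ∈ R, ∀ j < n, (p ξ).f a j = (p η).f a j := by
    intro ξ hξ η hη a ha j hj
    have h1 := hξ.2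
    have h2 := hη.2
    have := congrFun (congrFun (h1.trans h2.symm) ⟨a, ha⟩) ⟨j, hj⟩
    exact this
  refine ⟨S, hS, ?_⟩
  intro u hu
  -- common root agreement for elements of u
  set Dq : Finset E := u.biUnion (fun ξ => (p ξ).D) with hDq
  set fq : E → ℕ → ℕ := fun a =>
    if h : ∃ ξ, ξ ∈ u ∧ a ∈ (p ξ).D then (p h.choose).f a else fun _ => 0 with hfq
  have key : ∀ ξ ∈ u, ∀ a ∈ (p ξ).D, ∀ j < n, fq a j = (p ξ).f a j := by
    intro ξ hξ a ha j hj
    have hex : ∃ ζ, ζ ∈ u ∧ a ∈ (p ζ).D := ⟨ξ, hξ, ha⟩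
    have : fq a = (p hex.choose).f a := by rw [hfq]; exact dif_pos hex
    rw [this]
    set η := hex.choose with hη
    obtain ⟨hηu, haη⟩ := hex.choose_spec
    by_cases heq : η = ξ
    · rw [heq]
    · have hξS : ξ ∈ S := hu hξ
      have hηS : η ∈ S := hu hηu
      have hinter := hΔ η (hSsub hηS) ξ (hSsub hξS) heq
      have haR : a ∈ R := by
        rw [← hinter]; exact Finset.mem_inter.2 ⟨haη, ha⟩
      exact hpat η hηS ξ hξS a haR j hj
  have hmemD : ∀ a ∈ Dq, ∃ ξ, ξ ∈ u ∧ a ∈ (p ξ).D := by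
    intro a ha
    obtain ⟨ξ, hξ, haξ⟩ := Finset.mem_biUnion.mp ha
    exact ⟨ξ, hξ, haξ⟩
  refine ⟨⟨Dq, n, fq, ?_, ?_⟩, ?_⟩
  · intro a ha hn0
    obtain ⟨ξ, hξu, haξ⟩ := hmemD a ha
    rw [key ξ hξu a haξ 0 hn0]
    exact (p ξ).f_zero a haξ (by rw [hn ξ (hu hξu)]; exact hn0)
  · intro a ha j hj1 hjn
    obtain ⟨ξ, hξu, haξ⟩ := hmemD a ha
    rw [key ξ hξu a haξ j hjn]
    exact (p ξ).f_lt a haξ j hj1 (by rw [hn ξ (hu hξu)]; exact hjn)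
  · intro ξ hξ
    have hnξ : (p ξ).n = n := hn ξ (hu hξ)
    refine ⟨fun a ha => Finset.mem_biUnion.2 ⟨ξ, hξ, ha⟩, by rw [hnξ], ?_, ?_⟩
    · intro a ha j hj
      exact key ξ hξ a ha j (by rw [← hnξ]; exact hj)
    · intro a _ b _ _ j hj1 hj2
      rw [hnξ] at hj1
      exact absurd (hj1.trans_lt hj2) (lt_irrefl n)
end

section
/- For every partially ordered set (E, ≤_E), all a, b ∈ E with b ≰_E a, and every n ∈ ℕ, the set ℰ(ℍ_E, n, a, b) := {p ∈ ℍ_E : a ∈ D_p, b ∈ D_p, and there exists k with n ≤ k < n_p and f_p(a)(k) < f_p(b)(k)} is dense in ℍ_E: every condition in ℍ_E has an extension in ℰ(ℍ_E, n, a, b). -/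
/-- For all `a, b ∈ E` with `b ≰ a` and every `n ∈ ℕ`, the set
`ℰ(ℍ_E, n, a, b) = {p : a, b ∈ D_p and ∃ k, n ≤ k < n_p, f_p(a)(k) < f_p(b)(k)}`
is dense in `ℍ_E`. -/
theorem stmt12 {E : Type*} [PartialOrder E] (a b : E) (hba : ¬ b ≤ a) (n : ℕ)
    (q : HCond E) :
    ∃ p : HCond E, HExt p q ∧ a ∈ p.D ∧ b ∈ p.D ∧
      ∃ k, n ≤ k ∧ k < p.n ∧ p.f a k < p.f b k := by
  classical
  set m : ℕ := max q.n (max n 2) with hm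
  have hm2 : 2 ≤ m := le_max_of_le_right (le_max_right _ _)
  have hmn : n ≤ m := le_max_of_le_right (le_max_left _ _)
  have hmq : q.n ≤ m := le_max_left _ _
  refine ⟨⟨insert a (insert b q.D), m + 1,
    fun c j => if j < q.n then (if c ∈ q.D then q.f c j else 0)
      else if b ≤ c ∧ j = m then 1 else 0, ?_, ?_⟩, ?_, ?_, ?_, ?_⟩
  · intro c _ _
    by_cases h : 0 < q.n
    · simp only [h, if_pos]
      split
      · exact q.f_zero c ‹_› h
      · rfl
    · have : ¬ (0 < q.n) := h
      simp only [this, if_neg, if_false]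
      have : ¬ (b ≤ c ∧ 0 = m) := by
        rintro ⟨-, h0⟩; omega
      simp [this]
  · intro c _ j hj1 hj2
    by_cases h : j < q.n
    · simp only [h, if_pos]
      split
      · exact q.f_lt c ‹_› j hj1 h
      · omega
    · simp only [h, if_neg, if_false]
      split
      · next hc => omega
      · omega
  · refine ⟨fun c hc => by simp [hc], le_trans hmq (Nat.le_succ m), ?_, ?_⟩
    · intro c hc j hj
      simp [hj, hc]
    · intro c hc d hd hcd j hj1 hj2
      have hj : ¬ j < q.n := by omega
      simp only [hj, if_neg, if_false]
      split
      · next h =>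
        have : b ≤ d ∧ j = m := ⟨le_trans h.1 hcd, h.2⟩
        simp [this]
      · omega
  · simp
  · simp
  · refine ⟨m, hmn, Nat.lt_succ_self m, ?_⟩
    have hmq' : ¬ m < q.n := by omega
    have hna : ¬ (b ≤ a ∧ m = m) := fun h => hba h.1
    simp [hmq', hna]
    exact hba
end

section
/- Let (E, ≤_E) be a partially ordered set and let G be a filter on ℍ_E (a nonempty, upward closed, downward directed set of conditions) such that G intersects D(ℍ_E, n, a) for every n ∈ ℕ and a ∈ E, and G intersects ℰ(ℍ_E, n, a, b) for every n ∈ ℕ and all a, b ∈ E with b ≰_E a. Then setting Υ_G(a)(j) := f_p(a)(j) for any p ∈ G with a ∈ D_p and j < n_p gives a well-defined function Υ_G : E → P, and for all a, b ∈ E one has a ≤_E b if and only if Υ_G(a) ≤* Υ_G(b). -/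
open Filter

/-- If `G` is a filter on `ℍ_E` meeting all the dense sets `D(ℍ_E, n, a)` and
`ℰ(ℍ_E, n, a, b)`, then `Υ_G(a)(j) := f_p(a)(j)` (for any `p ∈ G` with `a ∈ D_p`,
`j < n_p`) is a well-defined map from `E` to `P`, and `a ≤_E b ↔ Υ_G(a) ≤* Υ_G(b)`. -/
theorem stmt13 {E : Type*} [PartialOrder E] (G : Set (HCond E))
    (hne : G.Nonempty)
    (hup : ∀ p ∈ G, ∀ q : HCond E, HExt p q → q ∈ G)
    (hdir : ∀ p ∈ G, ∀ q ∈ G, ∃ r ∈ G, HExt r p ∧ HExt r q)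
    (hD : ∀ (n : ℕ) (a : E), ∃ p ∈ G, n ≤ p.n ∧ a ∈ p.D)
    (hE : ∀ (n : ℕ) (a b : E), ¬ b ≤ a → ∃ p ∈ G, a ∈ p.D ∧ b ∈ p.D ∧
      ∃ k, n ≤ k ∧ k < p.n ∧ p.f a k < p.f b k) :
    ∃ Υ : E → ℕ → ℕ,
      (∀ p ∈ G, ∀ a ∈ p.D, ∀ j < p.n, Υ a j = p.f a j) ∧
      (∀ a : E, Υ a 0 = 0 ∧ ∀ k, 1 ≤ k → Υ a k < k) ∧
      (∀ a b : E, a ≤ b ↔ ∀ᶠ j in atTop, Υ a j ≤ Υ b j) := by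
  have agree : ∀ p ∈ G, ∀ q ∈ G, ∀ a ∈ p.D, a ∈ q.D → ∀ j, j < p.n → j < q.n →
      p.f a j = q.f a j := by
    intro p hp q hq a hap haq j hjp hjq
    obtain ⟨r, hr, ⟨_, _, hrp, _⟩, ⟨_, _, hrq, _⟩⟩ := hdir p hp q hq
    rw [← hrp a hap j hjp, ← hrq a haq j hjq]
  set Υ : E → ℕ → ℕ := fun a j => (Classical.choose (hD (j+1) a)).f a j with hΥ
  have hspec : ∀ a j, Classical.choose (hD (j+1) a) ∈ G ∧
      j + 1 ≤ (Classical.choose (hD (j+1) a)).n ∧ a ∈ (Classical.choose (hD (j+1) a)).D :=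
    fun a j => Classical.choose_spec (hD (j+1) a)
  have hval : ∀ p ∈ G, ∀ a ∈ p.D, ∀ j < p.n, Υ a j = p.f a j := by
    intro p hp a ha j hj
    obtain ⟨hq, hn, haq⟩ := hspec a j
    exact agree _ hq p hp a haq ha j (by omega) hj
  refine ⟨Υ, hval, ?_, ?_⟩
  · intro a
    constructor
    · obtain ⟨hq, hn, haq⟩ := hspec a 0
      exact (Classical.choose (hD (0+1) a)).f_zero a haq (by omega)
    · intro k hk
      obtain ⟨hq, hn, haq⟩ := hspec a k
      exact (Classical.choose (hD (k+1) a)).f_lt a haq k hk (by omega)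
  · intro a b
    constructor
    · intro hab
      obtain ⟨p, hp, _, hap⟩ := hD 0 a
      obtain ⟨q, hq, _, hbq⟩ := hD 0 b
      obtain ⟨r, hr, ⟨hDp, _, _, _⟩, ⟨hDq, _, _, _⟩⟩ := hdir p hp q hq
      have har : a ∈ r.D := hDp hap
      have hbr : b ∈ r.D := hDq hbq
      rw [Filter.eventually_atTop]
      refine ⟨r.n, fun j hj => ?_⟩
      obtain ⟨s, hs, hsn, hsa⟩ := hD (j+1) a
      obtain ⟨t, ht, ⟨hDr, htn, _, hmon⟩, ⟨_, htn', _, _⟩⟩ := hdir r hr s hs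
      have hjt : j < t.n := by omega
      rw [hval t ht a (hDr har) j hjt, hval t ht b (hDr hbr) j hjt]
      exact hmon a har b hbr hab j hj hjt
    · intro hev
      by_contra hab
      rw [Filter.eventually_atTop] at hev
      obtain ⟨N, hN⟩ := hev
      obtain ⟨p, hp, hbp, hap, k, hk, hkp, hlt⟩ := hE N b a hab
      have hle := hN k hk
      rw [hval p hp a hap k hkp, hval p hp b hbp k hkp] at hle
      omega
end

section
/- Let E be a subposet of a partially ordered set E′ (so the order on E is the restriction of the order on E′), and identify ℍ_E with a subordering of ℍ_{E′}. Define π_E : ℍ_{E′} → ℍ_E by π_E(p) := (D_p ∩ E, n_p, f_p restricted to D_p ∩ E). Then π_E is a reduction witnessing that ℍ_E is a regular subordering of ℍ_{E′}: for every p ∈ ℍ_{E′} one has p ≤ π_E(p), and every q ∈ ℍ_E with q ≤ π_E(p) is compatible with p in ℍ_{E′} (i.e., p and q have a common lower bound in ℍ_{E′}). -/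
open scoped Classical in
/-- The reduction `π_E : ℍ_{E'} → ℍ_E` given by `π_E(p) = (D_p ∩ E, n_p, f_p ↾ (D_p ∩ E))`,
where `E` is a subposet of `E'` and conditions of `ℍ_E` are identified with the conditions
of `ℍ_{E'}` whose domain is included in `E`. -/
noncomputable def piE {E' : Type*} (E : Set E') (p : HCond E') : HCond E' where
  D := p.D.filter fun a => a ∈ E
  n := p.n
  f := p.f
  f_zero := fun a ha h0 => p.f_zero a (Finset.mem_filter.mp ha).1 h0
  f_lt := fun a ha j h1 hj => p.f_lt a (Finset.mem_filter.mp ha).1 j h1 hj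

open scoped Classical in
noncomputable def rCond {E' : Type*} [PartialOrder E'] (p q : HCond E')
    (hpn : p.n ≤ q.n)
    (hagree : ∀ a ∈ p.D ∩ q.D, ∀ j < p.n, q.f a j = p.f a j) : HCond E' where
  D := q.D ∪ p.D
  n := q.n
  f := fun a j =>
    if a ∈ q.D then q.f a j
    else if j < p.n then p.f a j
    else ((p.D ∩ q.D).filter (· ≤ a)).sup (fun c => q.f c j)
  f_zero := by
    intro a ha h0
    by_cases hq : a ∈ q.D
    · simp only [hq, if_pos]
      exact q.f_zero a hq h0
    · have hp : a ∈ p.D := by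
        rcases Finset.mem_union.mp ha with h | h
        · exact absurd h hq
        · exact h
      simp only [hq, if_neg, if_false]
      by_cases hpn0 : 0 < p.n
      · rw [if_pos hpn0]
        exact p.f_zero a hp hpn0
      · rw [if_neg hpn0]
        refine Nat.eq_zero_of_le_zero (Finset.sup_le ?_)
        intro c hc
        rw [q.f_zero c (Finset.mem_inter.mp (Finset.mem_filter.mp hc).1).2 h0]
  f_lt := by
    intro a ha j h1 hj
    by_cases hq : a ∈ q.D
    · simp only [hq, if_pos]
      exact q.f_lt a hq j h1 hj
    · have hp : a ∈ p.D := by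
        rcases Finset.mem_union.mp ha with h | h
        · exact absurd h hq
        · exact h
      simp only [hq, if_neg, if_false]
      by_cases hjp : j < p.n
      · rw [if_pos hjp]
        exact p.f_lt a hp j h1 hjp
      · rw [if_neg hjp]
        refine Finset.sup_lt_iff (lt_of_lt_of_le (by norm_num) h1) |>.mpr ?_
        intro c hc
        exact q.f_lt c (Finset.mem_inter.mp (Finset.mem_filter.mp hc).1).2 j h1 hj

/-- `π_E` witnesses that `ℍ_E` is a regular subordering of `ℍ_{E'}`: `π_E(p)` is a
condition of `ℍ_E`, `p` extends `π_E(p)`, and every condition `q` of `ℍ_E` extending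
`π_E(p)` is compatible with `p` in `ℍ_{E'}`. -/
theorem stmt14 {E' : Type*} [PartialOrder E'] (E : Set E') (p : HCond E') :
    ((piE E p).D : Set E') ⊆ E ∧
    HExt p (piE E p) ∧
    ∀ q : HCond E', (q.D : Set E') ⊆ E → HExt q (piE E p) →
      ∃ r : HCond E', HExt r q ∧ HExt r p := by
  classical
  refine ⟨?_, ?_, ?_⟩
  · intro a ha
    simp only [piE, Finset.coe_filter, Set.mem_setOf_eq] at ha
    exact ha.2
  · exact ⟨Finset.filter_subset _ _, le_refl _, fun a _ j _ => rfl,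
      fun a _ b _ _ j hj hj' => absurd (lt_of_le_of_lt hj hj') (lt_irrefl _)⟩
  · intro q hqE hq
    obtain ⟨hD, hn, hag, hmono⟩ := hq
    -- unpack: piE E p has D = p.D.filter (· ∈ E), n = p.n, f = p.f
    have hD' : p.D.filter (fun a => a ∈ E) ⊆ q.D := hD
    have hn' : p.n ≤ q.n := hn
    have hag' : ∀ a ∈ p.D.filter (fun a => a ∈ E), ∀ j < p.n, q.f a j = p.f a j := hag
    have hmono' : ∀ a ∈ p.D.filter (fun a => a ∈ E), ∀ b ∈ p.D.filter (fun a => a ∈ E),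
        a ≤ b → ∀ j, p.n ≤ j → j < q.n → q.f a j ≤ q.f b j := hmono
    have hmemE : ∀ a ∈ q.D, a ∈ E := fun a ha => hqE (Finset.mem_coe.mpr ha)
    have hpq : ∀ a, a ∈ p.D ∩ q.D → a ∈ p.D.filter (fun a => a ∈ E) := by
      intro a ha
      have := Finset.mem_inter.mp ha
      exact Finset.mem_filter.mpr ⟨this.1, hmemE a this.2⟩
    have hagree : ∀ a ∈ p.D ∩ q.D, ∀ j < p.n, q.f a j = p.f a j :=
      fun a ha => hag' a (hpq a ha)
    refine ⟨rCond p q hn' hagree, ⟨?_, ?_, ?_, ?_⟩, ⟨?_, ?_, ?_, ?_⟩⟩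
    · exact Finset.subset_union_left
    · exact le_refl _
    · intro a ha j _
      simp only [rCond, if_pos ha]
    · intro a _ b _ _ j hj hj'
      exact absurd (lt_of_le_of_lt hj hj') (lt_irrefl _)
    · exact Finset.subset_union_right
    · exact hn'
    · -- agreement with p for j < p.n
      intro a ha j hj
      by_cases hq : a ∈ q.D
      · simp only [rCond, if_pos hq]
        exact hagree a (Finset.mem_inter.mpr ⟨ha, hq⟩) j hj
      · simp only [rCond, if_neg hq, if_pos hj]
    · -- monotonicity for p.n ≤ j < q.n
      intro a ha b hb hab j hj hj'
      simp only [rCond] at *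
      have hjp : ¬ j < p.n := by omega
      by_cases haq : a ∈ q.D <;> by_cases hbq : b ∈ q.D
      · rw [if_pos haq, if_pos hbq]
        exact hmono' a (hpq a (Finset.mem_inter.mpr ⟨ha, haq⟩))
          b (hpq b (Finset.mem_inter.mpr ⟨hb, hbq⟩)) hab j hj hj'
      · rw [if_pos haq, if_neg hbq, if_neg hjp]
        exact Finset.le_sup (f := fun c => q.f c j)
          (Finset.mem_filter.mpr ⟨Finset.mem_inter.mpr ⟨ha, haq⟩, hab⟩)
      · rw [if_neg haq, if_pos hbq, if_neg hjp]
        refine Finset.sup_le ?_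
        intro c hc
        obtain ⟨hc1, hc2⟩ := Finset.mem_filter.mp hc
        exact hmono' c (hpq c hc1) b (hpq b (Finset.mem_inter.mpr ⟨hb, hbq⟩))
          (le_trans hc2 hab) j hj hj'
      · rw [if_neg haq, if_neg hbq, if_neg hjp, if_neg hjp]
        refine Finset.sup_mono ?_
        intro c hc
        obtain ⟨hc1, hc2⟩ := Finset.mem_filter.mp hc
        exact Finset.mem_filter.mpr ⟨hc1, le_trans hc2 hab⟩
end

section
/- Let κ be a cardinal, let (E, ≤) be a partially ordered set, and let F(ζ), for ζ < κ, be pairwise disjoint finite nonempty subsets of E. Let 𝒰 be an ultrafilter on the set S of finite subsets of κ such that {t ∈ S : s ⊆ t} ∈ 𝒰 for every s ∈ S. Suppose that for every s ∈ S we are given elements x(s, ζ) ∈ F(ζ) for ζ ∈ s such that the family (x(s, ζ))_{ζ∈s} is monotone along s: either x(s, ζ) ≤ x(s, ζ′) whenever ζ ≤ ζ′ are in s, or x(s, ζ) ≥ x(s, ζ′) whenever ζ ≤ ζ′ are in s. Then for every ζ < κ there is a unique y(ζ) ∈ F(ζ) with {s ∈ S : ζ ∈ s and x(s, ζ) = y(ζ)}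 ∈ 𝒰, and the family (y(ζ))_{ζ<κ} is either a κ-chain or a κ*-chain in (E, ≤). -/
/-- Let `F ζ`, for `ζ < κ`, be pairwise disjoint finite nonempty subsets of a poset `E`,
and let `𝒰` be an ultrafilter on the finite subsets of `κ` containing every set
`{t : s ⊆ t}`.  If for each finite `s ⊆ κ` we are given `x s ζ ∈ F ζ` (for `ζ ∈ s`)
forming a monotone family along `s`, then for each `ζ` there is a unique `y ζ ∈ F ζ`
with `{s : ζ ∈ s and x s ζ = y ζ} ∈ 𝒰`, and `(y ζ)_{ζ<κ}` is a `κ`-chain or a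
`κ*`-chain. -/
theorem stmt19 {α : Type*} [PartialOrder α] (κ : Cardinal)
    (F : κ.ord.ToType → Set α)
    (hFfin : ∀ ζ, (F ζ).Finite) (hFne : ∀ ζ, (F ζ).Nonempty)
    (hFF : ∀ ζ η, ζ ≠ η → Disjoint (F ζ) (F η))
    (𝒰 : Ultrafilter (Finset κ.ord.ToType))
    (h𝒰 : ∀ s : Finset κ.ord.ToType, {t : Finset κ.ord.ToType | s ⊆ t} ∈ 𝒰)
    (x : Finset κ.ord.ToType → κ.ord.ToType → α)
    (hx_mem : ∀ s, ∀ ζ ∈ s, x s ζ ∈ F ζ)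
    (hx_mono : ∀ s : Finset κ.ord.ToType,
      (∀ ζ ∈ s, ∀ ζ' ∈ s, ζ ≤ ζ' → x s ζ ≤ x s ζ') ∨
      (∀ ζ ∈ s, ∀ ζ' ∈ s, ζ ≤ ζ' → x s ζ' ≤ x s ζ)) :
    ∃ y : κ.ord.ToType → α,
      (∀ ζ, y ζ ∈ F ζ ∧ {s : Finset κ.ord.ToType | ζ ∈ s ∧ x s ζ = y ζ} ∈ 𝒰 ∧
        ∀ z ∈ F ζ, {s : Finset κ.ord.ToType | ζ ∈ s ∧ x s ζ = z} ∈ 𝒰 → z = y ζ) ∧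
      (StrictMono y ∨ StrictAnti y) := by
  classical
  have key : ∀ ζ, ∃ z ∈ F ζ, {s : Finset κ.ord.ToType | ζ ∈ s ∧ x s ζ = z} ∈ 𝒰 := by
    intro ζ
    have h1 : {s : Finset κ.ord.ToType | ζ ∈ s} ∈ 𝒰 := by
      filter_upwards [h𝒰 {ζ}] with t ht using ht (Finset.mem_singleton_self ζ)
    have hU : (⋃ z ∈ F ζ, {s : Finset κ.ord.ToType | ζ ∈ s ∧ x s ζ = z}) ∈ 𝒰 :=
      Filter.mem_of_superset h1 (fun s hs => Set.mem_biUnion (hx_mem s ζ hs) ⟨hs, rfl⟩)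
    rcases (Ultrafilter.finite_biUnion_mem_iff (hFfin ζ)).mp hU with ⟨z, hz, hmem⟩
    exact ⟨z, hz, hmem⟩
  choose y hyF hy𝒰 using key
  have huniq : ∀ ζ, ∀ z ∈ F ζ,
      {s : Finset κ.ord.ToType | ζ ∈ s ∧ x s ζ = z} ∈ 𝒰 → z = y ζ := by
    intro ζ z _ hmem
    by_contra hne
    obtain ⟨s, ⟨_, h1⟩, _, h2⟩ := Filter.nonempty_of_mem (Filter.inter_mem hmem (hy𝒰 ζ))
    exact hne (h1 ▸ h2)
  have hne : ∀ ζ η, ζ ≠ η → y ζ ≠ y η := by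
    intro ζ η h he
    exact Set.disjoint_left.mp (hFF ζ η h) (hyF ζ) (he ▸ hyF η)
  refine ⟨y, fun ζ => ⟨hyF ζ, hy𝒰 ζ, huniq ζ⟩, ?_⟩
  by_cases hUp : {s : Finset κ.ord.ToType | ∀ ζ ∈ s, ∀ ζ' ∈ s, ζ ≤ ζ' → x s ζ ≤ x s ζ'} ∈ 𝒰
  · left
    intro ζ η hlt
    obtain ⟨s, ⟨⟨hζ, hxζ⟩, hη, hxη⟩, hs⟩ :=
      Filter.nonempty_of_mem (Filter.inter_mem (Filter.inter_mem (hy𝒰 ζ) (hy𝒰 η)) hUp)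
    have hle := hs ζ hζ η hη hlt.le
    rw [hxζ, hxη] at hle
    exact lt_of_le_of_ne hle (hne ζ η hlt.ne)
  · right
    have hDown : {s : Finset κ.ord.ToType | ∀ ζ ∈ s, ∀ ζ' ∈ s, ζ ≤ ζ' → x s ζ' ≤ x s ζ} ∈ 𝒰 := by
      filter_upwards [(Ultrafilter.compl_mem_iff_notMem).mpr hUp] with s hs
      rcases hx_mono s with h | h
      · exact absurd h hs
      · exact h
    intro ζ η hlt
    obtain ⟨s, ⟨⟨hζ, hxζ⟩, hη, hxη⟩, hs⟩ :=
      Filter.nonempty_of_mem (Filter.inter_mem (Filter.inter_mem (hy𝒰 ζ) (hy𝒰 η)) hDown)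
    have hle := hs ζ hζ η hη hlt.le
    rw [hxζ, hxη] at hle
    exact lt_of_le_of_ne hle (hne η ζ hlt.ne')
end
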